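/- arXiv:2101.04914 — 6 statements merged into one kernel-verified Lean document; each statement's English description precedes it below -/
import Mathlib

section
/- Let the family (X_{i,j})_{1 ≤ i < j ≤ n} be suffix-determined and satisfy the averaging property. Then for every m ∈ {1,…,n−1}, every choice of distinct elements t_{m+1},…,t_n of S, and the event A = {π⁻¹(k) = t_k for all k ∈ {m+1,…,n}} (which has positive probability), one has E[2^{C_1 + C_2 + ⋯ + C_m} | A] ≤ exp(E[C_1 + C_2 + ⋯ + C_m | A]). -/
open scoped Classical BigOperators

/-- Conditional expectation of `f` given the event `A`, for the uniform
distribution on a finite type: the average of `f` over the elements satisfying `A`. -/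
noncomputable def cexp {α : Type} [Fintype α] (A : α → Prop) (f : α → ℝ) : ℝ :=
  (∑ x ∈ Finset.univ.filter A, f x) / ((Finset.univ.filter A).card : ℝ)

section helpers
variable {α : Type} [Fintype α]

lemma cexp_congr (A B : α → Prop) (h : ∀ x, A x ↔ B x) (f : α → ℝ) :
    cexp A f = cexp B f := by
  unfold cexp
  have : Finset.univ.filter A = Finset.univ.filter B :=
    Finset.filter_congr (fun x _ => by simp [h x])
  rw [this]

lemma cexp_congr_fun (A : α → Prop) (f g : α → ℝ) (h : ∀ x, A x → f x = g x) :
    cexp A f = cexp A g := by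
  unfold cexp
  congr 1
  refine Finset.sum_congr rfl (fun x hx => h x ?_)
  simpa using hx

lemma cexp_add_const (A : α → Prop) (f : α → ℝ) (c : ℝ)
    (h : (Finset.univ.filter A).Nonempty) :
    cexp A (fun x => f x + c) = cexp A f + c := by
  unfold cexp
  have hc : ((Finset.univ.filter A).card : ℝ) ≠ 0 := by
    exact_mod_cast (Finset.card_pos.mpr h).ne'
  rw [Finset.sum_add_distrib, Finset.sum_const, nsmul_eq_mul]
  field_simp

lemma cexp_sum_eq (A : α → Prop) (f : α → ℝ) :
    ∑ x ∈ Finset.univ.filter A, f x = ((Finset.univ.filter A).card : ℝ) * cexp A f := by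
  unfold cexp
  rcases eq_or_ne ((Finset.univ.filter A).card : ℝ) 0 with h | h
  · have : Finset.univ.filter A = ∅ := by
      apply Finset.card_eq_zero.mp; exact_mod_cast h
    simp [this]
  · field_simp

end helpers

lemma aux
    {S : Type} [Fintype S] [DecidableEq S] (n : ℕ) (hn : 1 ≤ n)
    (hcard : Fintype.card S = n)
    (X : ℕ → ℕ → (S ≃ Fin n) → ℝ)
    (hX01 : ∀ i j π, 1 ≤ i → i < j → j ≤ n → X i j π = 0 ∨ X i j π = 1)
    (hsuffix : ∀ i j, 1 ≤ i → i < j → j ≤ n →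
      ∀ π π' : S ≃ Fin n,
        (∀ k : Fin n, i ≤ (k : ℕ) + 1 → π.symm k = π'.symm k) →
        X i j π = X i j π')
    (C : ℕ → (S ≃ Fin n) → ℝ)
    (hC : ∀ i π, C i π = ∑ j ∈ Finset.Icc (i + 1) n, X i j π)
    (havg : ∀ m, 1 ≤ m → m ≤ n → ∀ t : ℕ → S,
      Set.InjOn t (Set.Icc (m + 1) n) →
      ∀ a b : S, a ∉ t '' Set.Icc (m + 1) n → b ∉ t '' Set.Icc (m + 1) n →
        cexp (fun π => (π a : ℕ) + 1 = m ∧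
              ∀ k, m + 1 ≤ k → k ≤ n → (π (t k) : ℕ) + 1 = k)
            (fun π => ∑ i ∈ Finset.Icc 1 (min m (n - 1)), C i π)
          = cexp (fun π => (π b : ℕ) + 1 = m ∧
              ∀ k, m + 1 ≤ k → k ≤ n → (π (t k) : ℕ) + 1 = k)
            (fun π => ∑ i ∈ Finset.Icc 1 (min m (n - 1)), C i π)) :
    ∀ m : ℕ, m ≤ n - 1 → ∀ t : ℕ → S, Set.InjOn t (Set.Icc (m + 1) n) →
    cexp (fun π => ∀ k, m + 1 ≤ k → k ≤ n → (π (t k) : ℕ) + 1 = k)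
        (fun π => (2 : ℝ) ^ (∑ i ∈ Finset.Icc 1 m, C i π))
      ≤ Real.exp (cexp (fun π => ∀ k, m + 1 ≤ k → k ≤ n → (π (t k) : ℕ) + 1 = k)
          (fun π => ∑ i ∈ Finset.Icc 1 m, C i π)) := by
  intro m
  induction m with
  | zero =>
    intro _ t _
    have he : Finset.Icc 1 0 = (∅ : Finset ℕ) := by simp
    simp only [he, Finset.sum_empty, Real.rpow_zero]
    obtain ⟨A, hA⟩ : ∃ A : (S ≃ Fin n) → Prop,
        A = fun π => ∀ k, 0 + 1 ≤ k → k ≤ n → (π (t k) : ℕ) + 1 = k := ⟨_, rfl⟩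
    rw [← hA]
    have h0 : cexp A (fun _ => (0 : ℝ)) = 0 := by unfold cexp; simp
    rw [h0, Real.exp_zero]
    unfold cexp
    rw [Finset.sum_const, nsmul_eq_mul, mul_one]
    exact div_self_le_one _
  | succ m ih =>
    intro hm2 t ht
    obtain ⟨A, hA⟩ : ∃ A : (S ≃ Fin n) → Prop,
        A = fun π => ∀ k, m + 1 + 1 ≤ k → k ≤ n → (π (t k) : ℕ) + 1 = k := ⟨_, rfl⟩
    rw [← hA]
    have hAmem : ∀ π, A π ↔ ∀ k, m + 1 + 1 ≤ k → k ≤ n → (π (t k) : ℕ) + 1 = k := by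
      intro π; rw [hA]
    set F : Finset (S ≃ Fin n) := Finset.univ.filter A with hFdef
    by_cases hF : F.Nonempty
    swap
    · have hFe : F = ∅ := Finset.not_nonempty_iff_eq_empty.mp hF
      have h0 : ∀ f : (S ≃ Fin n) → ℝ, cexp A f = 0 := by
        intro f; unfold cexp; rw [← hFdef, hFe]; simp
      rw [h0, h0]
      exact (Real.exp_pos 0).le
    have hmn : m + 1 < n := by omega
    obtain ⟨As, hAs⟩ : ∃ As : S → (S ≃ Fin n) → Prop,
        As = fun s π => (π s : ℕ) + 1 = m + 1 ∧ A π := ⟨_, rfl⟩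
    have hAsmem : ∀ s π, As s π ↔ ((π s : ℕ) + 1 = m + 1 ∧ A π) := by
      intro s π; rw [hAs]
    set Fs : S → Finset (S ≃ Fin n) := fun s => Finset.univ.filter (As s) with hFs
    set R : Finset S :=
      Finset.univ.filter (fun s => ∀ k, m + 1 + 1 ≤ k → k ≤ n → s ≠ t k) with hR
    -- partition
    have hpart : F = R.biUnion Fs := by
      ext π
      simp only [hFdef, hFs, hR, Finset.mem_biUnion, Finset.mem_filter, Finset.mem_univ,
        true_and]
      constructor
      · intro hπ
        refine ⟨π.symm ⟨m, by omega⟩, ?_, ?_⟩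
        · intro k hk1 hk2 hs
          have := (hAmem π).mp hπ k hk1 hk2
          rw [← hs] at this
          simp at this
          omega
        · rw [hAsmem]
          exact ⟨by simp, hπ⟩
      · rintro ⟨s, _, hπ⟩
        exact ((hAsmem s π).mp hπ).2
    have hdisj : (R : Set S).PairwiseDisjoint Fs := by
      intro s _ s' _ hss
      simp only [Function.onFun, Finset.disjoint_left]
      intro π hπ hπ'
      simp only [hFs, Finset.mem_filter, Finset.mem_univ, true_and] at hπ hπ'
      rw [hAsmem] at hπ hπ'
      apply hss
      have : π s = π s' := by
        apply Fin.ext; omega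
      exact π.injective this
    have hsum : ∀ g : (S ≃ Fin n) → ℝ,
        ∑ π ∈ F, g π = ∑ s ∈ R, ∑ π ∈ Fs s, g π := by
      intro g; rw [hpart, Finset.sum_biUnion hdisj]
    have hcardsum : (F.card : ℝ) = ∑ s ∈ R, ((Fs s).card : ℝ) := by
      have := hsum (fun _ => (1 : ℝ))
      simpa using this
    have hcardF : 0 < (F.card : ℝ) := by exact_mod_cast Finset.card_pos.mpr hF
    -- constancy of C (m+1) on each piece
    have hCconst : ∀ s, ∀ π π' : S ≃ Fin n, As s π → As s π' →
        C (m + 1) π = C (m + 1) π' := by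
      intro s π π' h h'
      rw [hAsmem] at h h'
      have hsymm : ∀ k : Fin n, m + 1 ≤ (k : ℕ) + 1 → π.symm k = π'.symm k := by
        intro k hk
        rcases Nat.lt_or_ge (k : ℕ) (m + 1) with h1 | h1
        · have e1 : π s = k := by apply Fin.ext; have := h.1; omega
          have e2 : π' s = k := by apply Fin.ext; have := h'.1; omega
          have r1 : π.symm k = s := by rw [Equiv.symm_apply_eq]; exact e1.symm
          have r2 : π'.symm k = s := by rw [Equiv.symm_apply_eq]; exact e2.symm
          rw [r1, r2]
        · have hkn : (k : ℕ) < n := k.isLt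
          have c1 := (hAmem π).mp h.2 ((k : ℕ) + 1) (by omega) (by omega)
          have c2 := (hAmem π').mp h'.2 ((k : ℕ) + 1) (by omega) (by omega)
          have e1 : π (t ((k : ℕ) + 1)) = k := by apply Fin.ext; omega
          have e2 : π' (t ((k : ℕ) + 1)) = k := by apply Fin.ext; omega
          have r1 : π.symm k = t ((k : ℕ) + 1) := by
            rw [Equiv.symm_apply_eq]; exact e1.symm
          have r2 : π'.symm k = t ((k : ℕ) + 1) := by
            rw [Equiv.symm_apply_eq]; exact e2.symm
          rw [r1, r2]
      rw [hC, hC]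
      refine Finset.sum_congr rfl (fun j hj => ?_)
      rw [Finset.mem_Icc] at hj
      exact hsuffix (m + 1) j (by omega) (by omega) (by omega) π π' hsymm
    -- μ: common conditional expectation
    obtain ⟨π₀, hπ₀⟩ := hF
    have hπ₀A : A π₀ := by
      have := hπ₀
      rw [hFdef, Finset.mem_filter] at this
      exact this.2
    have hs₀R : π₀.symm ⟨m, by omega⟩ ∈ R := by
      simp only [hR, Finset.mem_filter, Finset.mem_univ, true_and]
      intro k hk1 hk2 hs
      have := (hAmem π₀).mp hπ₀A k hk1 hk2
      rw [← hs] at this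
      simp at this
      omega
    set s₀ : S := π₀.symm ⟨m, by omega⟩ with hs₀
    set μ : ℝ := cexp (As s₀) (fun π => ∑ i ∈ Finset.Icc 1 (m + 1), C i π) with hμdef
    have hnotim : ∀ s ∈ R, s ∉ t '' Set.Icc (m + 1 + 1) n := by
      intro s hs
      simp only [hR, Finset.mem_filter, Finset.mem_univ, true_and] at hs
      rintro ⟨k, hk, rfl⟩
      exact hs k hk.1 hk.2 rfl
    have hμ : ∀ s ∈ R, cexp (As s) (fun π => ∑ i ∈ Finset.Icc 1 (m + 1), C i π) = μ := by
      intro s hs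
      have hmin : min (m + 1) (n - 1) = m + 1 := by omega
      have heq := havg (m + 1) (by omega) (by omega) t ht s s₀ (hnotim s hs) (hnotim s₀ hs₀R)
      rw [hmin] at heq
      have e1 : ∀ x : S, cexp (fun π => (π x : ℕ) + 1 = m + 1 ∧
            ∀ k, m + 1 + 1 ≤ k → k ≤ n → (π (t k) : ℕ) + 1 = k)
          (fun π => ∑ i ∈ Finset.Icc 1 (m + 1), C i π)
          = cexp (As x) (fun π => ∑ i ∈ Finset.Icc 1 (m + 1), C i π) := by
        intro x
        apply cexp_congr
        intro π
        rw [hAsmem, hAmem]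
      rw [e1 s, e1 s₀] at heq
      exact heq
    -- key bound per piece
    have hkey : ∀ s ∈ R,
        ∑ π ∈ Fs s, (2 : ℝ) ^ (∑ i ∈ Finset.Icc 1 (m + 1), C i π)
          ≤ ((Fs s).card : ℝ) * Real.exp μ := by
      intro s hs
      by_cases hFse : (Fs s).Nonempty
      swap
      · rw [Finset.not_nonempty_iff_eq_empty.mp hFse]; simp
      obtain ⟨πs, hπs⟩ := hFse
      have hπsA : As s πs := by
        have := hπs
        rw [hFs, Finset.mem_filter] at this
        exact this.2
      have hc0 : 0 ≤ C (m + 1) πs := by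
        rw [hC]
        refine Finset.sum_nonneg (fun j hj => ?_)
        rw [Finset.mem_Icc] at hj
        rcases hX01 (m + 1) j πs (by omega) (by omega) (by omega) with h | h <;>
          rw [h] <;> norm_num
      have hsplit : ∀ π, As s π →
          (∑ i ∈ Finset.Icc 1 (m + 1), C i π)
            = (∑ i ∈ Finset.Icc 1 m, C i π) + C (m + 1) πs := by
        intro π hπ
        rw [Finset.sum_Icc_succ_top (by omega : 1 ≤ m + 1)]
        congr 1
        exact hCconst s π πs hπ hπsA
      -- the IH applied to the extended function t'
      have hsR : ∀ k, m + 1 + 1 ≤ k → k ≤ n → s ≠ t k := by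
        have := hs
        rw [hR, Finset.mem_filter] at this
        exact this.2
      obtain ⟨t', ht'⟩ : ∃ t' : ℕ → S,
          t' = fun k => if k = m + 1 then s else t k := ⟨_, rfl⟩
      have ht'val : ∀ k, t' k = if k = m + 1 then s else t k := by
        intro k; rw [ht']
      have hiff : ∀ π : S ≃ Fin n,
          (∀ k, m + 1 ≤ k → k ≤ n → (π (t' k) : ℕ) + 1 = k) ↔ As s π := by
        intro π
        rw [hAsmem, hAmem]
        constructor
        · intro h
          constructor
          · have := h (m + 1) (le_refl _) (by omega)
            rw [ht'val] at this
            simpa using this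
          · intro k hk1 hk2
            have := h k (by omega) hk2
            rw [ht'val, if_neg (by omega : k ≠ m + 1)] at this
            exact this
        · intro h k hk1 hk2
          rw [ht'val]
          by_cases hk : k = m + 1
          · subst hk; simp [h.1]
          · rw [if_neg hk]
            exact h.2 k (by omega) hk2
      have ht'inj : Set.InjOn t' (Set.Icc (m + 1) n) := by
        intro x hx y hy hxy
        rw [ht'val, ht'val] at hxy
        simp only [Set.mem_Icc] at hx hy
        by_cases hxm : x = m + 1 <;> by_cases hym : y = m + 1
        · omega
        · exfalso
          rw [if_pos hxm, if_neg hym] at hxy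
          exact hsR y (by omega) hy.2 hxy
        · exfalso
          rw [if_neg hxm, if_pos hym] at hxy
          exact hsR x (by omega) hx.2 hxy.symm
        · rw [if_neg hxm, if_neg hym] at hxy
          exact ht (by simp only [Set.mem_Icc]; omega) (by simp only [Set.mem_Icc]; omega) hxy
      have hIH := ih (by omega) t' ht'inj
      rw [cexp_congr _ _ hiff, cexp_congr _ _ hiff] at hIH
      -- conditional expectations on the piece
      have hFse' : (Finset.univ.filter (As s)).Nonempty := ⟨πs, hπs⟩
      have hEs : cexp (As s) (fun π => ∑ i ∈ Finset.Icc 1 (m + 1), C i π)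
          = cexp (As s) (fun π => ∑ i ∈ Finset.Icc 1 m, C i π) + C (m + 1) πs := by
        rw [cexp_congr_fun (As s) _
          (fun π => (∑ i ∈ Finset.Icc 1 m, C i π) + C (m + 1) πs) hsplit]
        exact cexp_add_const _ _ _ hFse'
      have hEsm : cexp (As s) (fun π => ∑ i ∈ Finset.Icc 1 m, C i π)
          = μ - C (m + 1) πs := by
        have := hμ s hs
        rw [hEs] at this
        linarith
      -- assemble the bound on the piece
      have hsum2 : ∑ π ∈ Fs s, (2 : ℝ) ^ (∑ i ∈ Finset.Icc 1 (m + 1), C i π)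
          = (∑ π ∈ Fs s, (2 : ℝ) ^ (∑ i ∈ Finset.Icc 1 m, C i π))
              * (2 : ℝ) ^ (C (m + 1) πs) := by
        rw [Finset.sum_mul]
        refine Finset.sum_congr rfl (fun π hπ => ?_)
        have hπA : As s π := by
          have := hπ
          rw [hFs, Finset.mem_filter] at this
          exact this.2
        rw [hsplit π hπA, Real.rpow_add (by norm_num : (0:ℝ) < 2)]
      have hsum3 : ∑ π ∈ Fs s, (2 : ℝ) ^ (∑ i ∈ Finset.Icc 1 m, C i π)
          = ((Fs s).card : ℝ)
              * cexp (As s) (fun π => (2:ℝ) ^ (∑ i ∈ Finset.Icc 1 m, C i π)) :=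
        cexp_sum_eq _ _
      have hb1 : cexp (As s) (fun π => (2:ℝ) ^ (∑ i ∈ Finset.Icc 1 m, C i π))
          ≤ Real.exp (μ - C (m + 1) πs) := by
        rw [← hEsm]; exact hIH
      have hb2 : Real.exp (μ - C (m + 1) πs) * (2 : ℝ) ^ (C (m + 1) πs) ≤ Real.exp μ := by
        rw [Real.rpow_def_of_pos (by norm_num : (0:ℝ) < 2), ← Real.exp_add]
        apply Real.exp_le_exp.mpr
        have hlog : Real.log 2 ≤ 1 := by
          have := Real.log_le_sub_one_of_pos (by norm_num : (0:ℝ) < 2)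
          linarith
        nlinarith [mul_le_mul_of_nonneg_right hlog hc0]
      have hcards : (0:ℝ) ≤ ((Fs s).card : ℝ) := Nat.cast_nonneg _
      have h2c : (0:ℝ) ≤ (2:ℝ) ^ (C (m + 1) πs) :=
        (Real.rpow_pos_of_pos (by norm_num) _).le
      calc ∑ π ∈ Fs s, (2 : ℝ) ^ (∑ i ∈ Finset.Icc 1 (m + 1), C i π)
          = (∑ π ∈ Fs s, (2 : ℝ) ^ (∑ i ∈ Finset.Icc 1 m, C i π))
              * (2:ℝ) ^ (C (m + 1) πs) := hsum2
        _ = ((Fs s).card : ℝ)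
              * cexp (As s) (fun π => (2:ℝ) ^ (∑ i ∈ Finset.Icc 1 m, C i π))
              * (2:ℝ) ^ (C (m + 1) πs) := by rw [hsum3]
        _ ≤ ((Fs s).card : ℝ) * Real.exp (μ - C (m + 1) πs)
              * (2:ℝ) ^ (C (m + 1) πs) :=
            mul_le_mul_of_nonneg_right (mul_le_mul_of_nonneg_left hb1 hcards) h2c
        _ = ((Fs s).card : ℝ)
              * (Real.exp (μ - C (m + 1) πs) * (2:ℝ) ^ (C (m + 1) πs)) := by ring
        _ ≤ ((Fs s).card : ℝ) * Real.exp μ := mul_le_mul_of_nonneg_left hb2 hcards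
    -- total conditional expectation equals μ
    have hEq : cexp A (fun π => ∑ i ∈ Finset.Icc 1 (m + 1), C i π) = μ := by
      unfold cexp
      rw [← hFdef, hsum (fun π => ∑ i ∈ Finset.Icc 1 (m + 1), C i π)]
      have heach : ∀ s ∈ R, ∑ π ∈ Fs s, (∑ i ∈ Finset.Icc 1 (m + 1), C i π)
          = ((Fs s).card : ℝ) * μ := by
        intro s hs
        rw [← hμ s hs]
        exact cexp_sum_eq _ _
      rw [Finset.sum_congr rfl heach, ← Finset.sum_mul, ← hcardsum]
      exact mul_div_cancel_left₀ _ hcardF.ne'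
    rw [hEq]
    -- final assembly
    unfold cexp
    rw [← hFdef, hsum (fun π => (2:ℝ) ^ (∑ i ∈ Finset.Icc 1 (m + 1), C i π))]
    rw [div_le_iff₀ hcardF]
    calc ∑ s ∈ R, ∑ π ∈ Fs s, (2:ℝ) ^ (∑ i ∈ Finset.Icc 1 (m + 1), C i π)
        ≤ ∑ s ∈ R, ((Fs s).card : ℝ) * Real.exp μ := Finset.sum_le_sum hkey
      _ = (∑ s ∈ R, ((Fs s).card : ℝ)) * Real.exp μ := by rw [← Finset.sum_mul]
      _ = (F.card : ℝ) * Real.exp μ := by rw [← hcardsum]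
      _ = Real.exp μ * (F.card : ℝ) := by ring

/-- for a suffix-determined family `(X i j)_{1 ≤ i < j ≤ n}` of
`{0,1}`-valued random variables on uniformly random bijections `π : S → {1,…,n}`
(encoded as `π : S ≃ Fin n`, the priority of `s` being `(π s : ℕ) + 1`)
satisfying the averaging property, for every `m ∈ {1,…,n−1}` and every choice of
distinct elements `t (m+1), …, t n` of `S`, with
`A = {π | π⁻¹(k) = t k for all k ∈ {m+1,…,n}}`, one has
`E[2^(C 1 + ⋯ + C m) | A] ≤ exp (E[C 1 + ⋯ + C m | A])`. -/
theorem stmt0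
    {S : Type} [Fintype S] [DecidableEq S] (n : ℕ) (hn : 1 ≤ n)
    (hcard : Fintype.card S = n)
    (X : ℕ → ℕ → (S ≃ Fin n) → ℝ)
    (hX01 : ∀ i j π, 1 ≤ i → i < j → j ≤ n → X i j π = 0 ∨ X i j π = 1)
    -- suffix-determined: `X i j` depends only on the elements of priorities `i, …, n`
    (hsuffix : ∀ i j, 1 ≤ i → i < j → j ≤ n →
      ∀ π π' : S ≃ Fin n,
        (∀ k : Fin n, i ≤ (k : ℕ) + 1 → π.symm k = π'.symm k) →
        X i j π = X i j π')
    -- column sums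
    (C : ℕ → (S ≃ Fin n) → ℝ)
    (hC : ∀ i π, C i π = ∑ j ∈ Finset.Icc (i + 1) n, X i j π)
    -- averaging property
    (havg : ∀ m, 1 ≤ m → m ≤ n → ∀ t : ℕ → S,
      Set.InjOn t (Set.Icc (m + 1) n) →
      ∀ a b : S, a ∉ t '' Set.Icc (m + 1) n → b ∉ t '' Set.Icc (m + 1) n →
        cexp (fun π => (π a : ℕ) + 1 = m ∧
              ∀ k, m + 1 ≤ k → k ≤ n → (π (t k) : ℕ) + 1 = k)
            (fun π => ∑ i ∈ Finset.Icc 1 (min m (n - 1)), C i π)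
          = cexp (fun π => (π b : ℕ) + 1 = m ∧
              ∀ k, m + 1 ≤ k → k ≤ n → (π (t k) : ℕ) + 1 = k)
            (fun π => ∑ i ∈ Finset.Icc 1 (min m (n - 1)), C i π))
    (m : ℕ) (hm1 : 1 ≤ m) (hm2 : m ≤ n - 1)
    (t : ℕ → S) (ht : Set.InjOn t (Set.Icc (m + 1) n)) :
    cexp (fun π => ∀ k, m + 1 ≤ k → k ≤ n → (π (t k) : ℕ) + 1 = k)
        (fun π => (2 : ℝ) ^ (∑ i ∈ Finset.Icc 1 m, C i π))
      ≤ Real.exp (cexp (fun π => ∀ k, m + 1 ≤ k → k ≤ n → (π (t k) : ℕ) + 1 = k)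
          (fun π => ∑ i ∈ Finset.Icc 1 m, C i π)) :=
  aux n hn hcard X hX01 hsuffix C hC havg m hm2 t ht
end

section
/- Let the family (X_{i,j})_{1 ≤ i < j ≤ n} be suffix-determined and satisfy the averaging property, and suppose E[X] ≤ c·n for some real c > 0, where X = Σ_{1≤i<j≤n} X_{i,j}. Then for every real β ≥ (c+1)/ln 2 one has Pr[X ≥ β·n] ≤ e^{−n}. -/
open scoped Classical BigOperators

/-- Probability of the event `A` under the uniform distribution on a finite type. -/
noncomputable def unifPr {α : Type} [Fintype α] (A : α → Prop) : ℝ :=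
  ((Finset.univ.filter A).card : ℝ) / (Fintype.card α : ℝ)

/-- Expectation of `f` under the uniform distribution on a finite type. -/
noncomputable def unifE {α : Type} [Fintype α] (f : α → ℝ) : ℝ :=
  (∑ x : α, f x) / (Fintype.card α : ℝ)

/-- auxiliary: the event that the suffix of priorities `m+1,…,n` is given by `t`. -/
def Aev {S : Type} (n m : ℕ) (t : ℕ → S) (π : S ≃ Fin n) : Prop :=
  ∀ k, m + 1 ≤ k → k ≤ n → (π (t k) : ℕ) + 1 = k

/-- auxiliary: partial sum of column sums. -/
noncomputable def Ysum {S : Type} (n : ℕ) (C : ℕ → (S ≃ Fin n) → ℝ) (m : ℕ)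
    (π : S ≃ Fin n) : ℝ :=
  ∑ i ∈ Finset.Icc 1 (min m (n - 1)), C i π

lemma two_rpow_le_exp (y : ℝ) (hy : 0 ≤ y) : (2:ℝ) ^ y ≤ Real.exp y := by
  rw [Real.rpow_def_of_pos (by norm_num : (0:ℝ) < 2)]
  refine Real.exp_le_exp.mpr ?_
  nlinarith [Real.log_two_lt_d9]

theorem key_lemma {S : Type} [Fintype S] [DecidableEq S] (n : ℕ) (hn : 1 ≤ n)
    (X : ℕ → ℕ → (S ≃ Fin n) → ℝ)
    (hX01 : ∀ i j π, 1 ≤ i → i < j → j ≤ n → X i j π = 0 ∨ X i j π = 1)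
    (hsuffix : ∀ i j, 1 ≤ i → i < j → j ≤ n →
      ∀ π π' : S ≃ Fin n,
        (∀ k : Fin n, i ≤ (k : ℕ) + 1 → π.symm k = π'.symm k) →
        X i j π = X i j π')
    (C : ℕ → (S ≃ Fin n) → ℝ)
    (hC : ∀ i π, C i π = ∑ j ∈ Finset.Icc (i + 1) n, X i j π)
    (havg : ∀ m, 1 ≤ m → m ≤ n → ∀ t : ℕ → S,
      Set.InjOn t (Set.Icc (m + 1) n) →
      ∀ a b : S, a ∉ t '' Set.Icc (m + 1) n → b ∉ t '' Set.Icc (m + 1) n →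
        cexp (fun π => (π a : ℕ) + 1 = m ∧
              ∀ k, m + 1 ≤ k → k ≤ n → (π (t k) : ℕ) + 1 = k)
            (fun π => ∑ i ∈ Finset.Icc 1 (min m (n - 1)), C i π)
          = cexp (fun π => (π b : ℕ) + 1 = m ∧
              ∀ k, m + 1 ≤ k → k ≤ n → (π (t k) : ℕ) + 1 = k)
            (fun π => ∑ i ∈ Finset.Icc 1 (min m (n - 1)), C i π)) :
    ∀ m, m ≤ n → ∀ t : ℕ → S, Set.InjOn t (Set.Icc (m + 1) n) →
      (∑ π ∈ Finset.univ.filter (Aev n m t), (2:ℝ) ^ (Ysum n C m π))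
        ≤ ((Finset.univ.filter (Aev n m t)).card : ℝ)
            * Real.exp (cexp (Aev n m t) (Ysum n C m)) := by
  intro m
  induction m with
  | zero =>
      intro _ t _
      have hY0 : ∀ π : S ≃ Fin n, Ysum n C 0 π = 0 := by
        intro π; simp [Ysum]
      have hce : cexp (Aev n 0 t) (Ysum n C 0) = 0 := by
        simp [cexp, hY0]
      rw [hce]
      simp [hY0]
  | succ m ih =>
      intro hm1 t ht
      by_cases hFe : Finset.univ.filter (Aev n (m+1) t) = ∅
      · rw [hFe]; simp
      have hFne : (Finset.univ.filter (Aev n (m+1) t)).Nonempty :=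
        Finset.nonempty_of_ne_empty hFe
      have hmn : m < n := hm1
      set pos : Fin n := ⟨m, hmn⟩ with hpos
      set φ : (S ≃ Fin n) → S := fun π => π.symm pos with hφ
      set F := Finset.univ.filter (Aev n (m+1) t) with hF
      set ta : S → (ℕ → S) := fun a => Function.update t (m+1) a with hta
      -- fibers over good elements
      have fiber_eq : ∀ a : S, a ∉ t '' Set.Icc (m + 2) n →
          F.filter (fun π => φ π = a) = Finset.univ.filter (Aev n m (ta a)) := by
        intro a _
        ext π
        simp only [hF, Finset.mem_filter, Finset.mem_univ, true_and, Aev, hφ, hta]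
        constructor
        · rintro ⟨hA, hφa⟩
          intro k hk1 hk2
          rcases eq_or_lt_of_le hk1 with hk | hk
          · rw [Function.update_apply, if_pos hk.symm]
            have hπa : pos = π a := (Equiv.symm_apply_eq π).mp hφa
            have : (π a : ℕ) = m := by rw [← hπa]
            omega
          · rw [Function.update_apply, if_neg (by omega)]
            exact hA k (by omega) hk2
        · intro h
          constructor
          · intro k hk1 hk2
            have := h k (by omega) hk2
            rwa [Function.update_apply, if_neg (by omega)] at this
          · have := h (m+1) le_rfl hm1
            rw [Function.update_apply, if_pos rfl] at this
            have hπa : π a = pos := by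
              apply Fin.ext
              simpa [hpos] using by omega
            rw [Equiv.symm_apply_eq]
            exact hπa.symm
      have fiber_empty : ∀ a : S, a ∈ t '' Set.Icc (m + 2) n →
          F.filter (fun π => φ π = a) = ∅ := by
        intro a ha
        obtain ⟨k, hk, rfl⟩ := ha
        simp only [Set.mem_Icc] at hk
        rw [Finset.filter_eq_empty_iff]
        intro π hπ hφtk
        have hA : Aev n (m+1) t π := by
          have := Finset.mem_filter.mp (hF ▸ hπ)
          exact this.2
        have h1 := hA k (by omega) hk.2
        have h2 : π (t k) = pos := by
          rw [← hφtk]; exact π.apply_symm_apply pos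
        rw [h2] at h1
        simp only [hpos] at h1
        omega
      -- injectivity of the updated suffix assignment
      have injOn_ta : ∀ a : S, a ∉ t '' Set.Icc (m + 2) n →
          Set.InjOn (ta a) (Set.Icc (m + 1) n) := by
        intro a ha x hx y hy hxy
        simp only [Set.mem_Icc] at hx hy
        simp only [hta, Function.update_apply] at hxy
        rcases eq_or_ne x (m+1) with rfl | hx1 <;> rcases eq_or_ne y (m+1) with rfl | hy1
        · rfl
        · rw [if_pos rfl, if_neg hy1] at hxy
          exact absurd ⟨y, ⟨by omega, hy.2⟩, hxy.symm⟩ ha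
        · rw [if_neg hx1, if_pos rfl] at hxy
          exact absurd ⟨x, ⟨by omega, hx.2⟩, hxy⟩ ha
        · rw [if_neg hx1, if_neg hy1] at hxy
          exact ht ⟨by omega, hx.2⟩ ⟨by omega, hy.2⟩ hxy
      -- the havg event is our event
      have event_eq : ∀ a : S,
          (fun π : S ≃ Fin n => (π a : ℕ) + 1 = m + 1 ∧
              ∀ k, m + 1 + 1 ≤ k → k ≤ n → (π (t k) : ℕ) + 1 = k)
            = Aev n m (ta a) := by
        intro a
        funext π
        apply propext
        simp only [Aev, hta]
        constructor
        · rintro ⟨h1, h2⟩ k hk1 hk2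
          rcases eq_or_lt_of_le hk1 with hk | hk
          · rw [Function.update_apply, if_pos hk.symm]; omega
          · rw [Function.update_apply, if_neg (by omega)]
            exact h2 k (by omega) hk2
        · intro h
          constructor
          · have := h (m+1) le_rfl hm1
            rwa [Function.update_apply, if_pos rfl] at this
          · intro k hk1 hk2
            have := h k (by omega) hk2
            rwa [Function.update_apply, if_neg (by omega)] at this
      -- the common conditional expectation value
      obtain ⟨πs, hπs⟩ := hFne
      set astar : S := φ πs with hastar
      have hgood_star : astar ∉ t '' Set.Icc (m + 2) n := by
        intro hmem
        have : πs ∈ F.filter (fun π => φ π = astar) := by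
          rw [Finset.mem_filter]; exact ⟨hF ▸ hπs, rfl⟩
        rw [fiber_empty astar hmem] at this
        exact absurd this (Finset.notMem_empty πs)
      set μ : ℝ := cexp (Aev n m (ta astar)) (Ysum n C (m+1)) with hμdef
      have hμ : ∀ a : S, a ∉ t '' Set.Icc (m + 2) n →
          cexp (Aev n m (ta a)) (Ysum n C (m+1)) = μ := by
        intro a ha
        have h := havg (m+1) (by omega) hm1 t ht a astar ha hgood_star
        have e1 : ∀ b : S, cexp (fun π : S ≃ Fin n => (π b : ℕ) + 1 = m + 1 ∧
              ∀ k, m + 1 + 1 ≤ k → k ≤ n → (π (t k) : ℕ) + 1 = k)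
              (fun π => ∑ i ∈ Finset.Icc 1 (min (m+1) (n - 1)), C i π)
            = cexp (Aev n m (ta b)) (Ysum n C (m+1)) := by
          intro b
          rw [event_eq b]
          rfl
        rw [e1 a, e1 astar] at h
        exact h
      have cexp_spec : ∀ (A : (S ≃ Fin n) → Prop) (f : (S ≃ Fin n) → ℝ),
          cexp A f
            = (∑ x ∈ Finset.univ.filter A, f x) / ((Finset.univ.filter A).card : ℝ) :=
        fun A f => rfl
      -- the increment
      set Dv : (S ≃ Fin n) → ℝ := fun π => if m + 1 ≤ n - 1 then C (m+1) π else 0 with hDv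
      have hsplit : ∀ π, Ysum n C (m+1) π = Ysum n C m π + Dv π := by
        intro π
        by_cases h : m + 1 ≤ n - 1
        · have h1 : min (m+1) (n-1) = m + 1 := min_eq_left h
          have h2 : min m (n-1) = m := min_eq_left (by omega)
          simp only [Ysum, h1, h2, hDv, if_pos h]
          exact Finset.sum_Icc_succ_top (by omega) _
        · have h1 : min (m+1) (n-1) = n - 1 := min_eq_right (by omega)
          have h2 : min m (n-1) = n - 1 := min_eq_right (by omega)
          simp only [Ysum, h1, h2, hDv, if_neg h, add_zero]
      have hDnn : ∀ π, 0 ≤ Dv π := by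
        intro π
        simp only [hDv]
        split
        · next h =>
            rw [hC]
            refine Finset.sum_nonneg fun j hj => ?_
            simp only [Finset.mem_Icc] at hj
            rcases hX01 (m+1) j π (by omega) (by omega) hj.2 with h0 | h0 <;> rw [h0] <;> norm_num
        · exact le_rfl
      have hDconst : ∀ a : S, ∀ π ∈ Finset.univ.filter (Aev n m (ta a)),
          ∀ π' ∈ Finset.univ.filter (Aev n m (ta a)), Dv π = Dv π' := by
        intro a π hπ π' hπ'
        have hAπ : Aev n m (ta a) π := (Finset.mem_filter.mp hπ).2
        have hAπ' : Aev n m (ta a) π' := (Finset.mem_filter.mp hπ').2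
        simp only [hDv]
        split
        · next h =>
            rw [hC, hC]
            refine Finset.sum_congr rfl fun j hj => ?_
            simp only [Finset.mem_Icc] at hj
            refine hsuffix (m+1) j (by omega) (by omega) hj.2 π π' fun k hk => ?_
            have hkn : (k : ℕ) < n := k.isLt
            have e1 := hAπ ((k : ℕ) + 1) (by omega) (by omega)
            have e2 := hAπ' ((k : ℕ) + 1) (by omega) (by omega)
            have f1 : π (ta a ((k : ℕ) + 1)) = k := Fin.ext (by omega)
            have f2 : π' (ta a ((k : ℕ) + 1)) = k := Fin.ext (by omega)
            calc π.symm k = ta a ((k : ℕ) + 1) := (Equiv.symm_apply_eq π).mpr f1.symm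
              _ = π'.symm k := ((Equiv.symm_apply_eq π').mpr f2.symm).symm
        · rfl
      -- sums over good fibers
      have hGsum : ∀ a : S, a ∉ t '' Set.Icc (m + 2) n →
          ∑ π ∈ Finset.univ.filter (Aev n m (ta a)), Ysum n C (m+1) π
            = ((Finset.univ.filter (Aev n m (ta a))).card : ℝ) * μ := by
        intro a ha
        by_cases hne : Finset.univ.filter (Aev n m (ta a)) = ∅
        · rw [hne]; simp
        · have hcpos : (0:ℝ) < ((Finset.univ.filter (Aev n m (ta a))).card : ℝ) := by
            exact_mod_cast Finset.card_pos.mpr (Finset.nonempty_of_ne_empty hne)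
          have h1 := hμ a ha
          rw [cexp_spec, div_eq_iff hcpos.ne'] at h1
          rw [h1]; ring
      have hsumμ : ∀ a : S,
          ∑ π ∈ F.filter (fun π => φ π = a), Ysum n C (m+1) π
            = ((F.filter (fun π => φ π = a)).card : ℝ) * μ := by
        intro a
        by_cases hg : a ∈ t '' Set.Icc (m + 2) n
        · rw [fiber_empty a hg]; simp
        · rw [fiber_eq a hg]; exact hGsum a hg
      have hFsum : ∀ f : (S ≃ Fin n) → ℝ,
          ∑ π ∈ F, f π = ∑ a : S, ∑ π ∈ F.filter (fun π => φ π = a), f π := by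
        intro f
        exact (Finset.sum_fiberwise_of_maps_to (fun x _ => Finset.mem_univ (φ x)) f).symm
      have hcardsum : (F.card : ℝ) = ∑ a : S, ((F.filter (fun π => φ π = a)).card : ℝ) := by
        rw [Finset.card_eq_sum_card_fiberwise (fun x (_ : x ∈ F) => Finset.mem_univ (φ x))]
        push_cast
        ring
      have hFcardpos : (0:ℝ) < (F.card : ℝ) := by
        exact_mod_cast Finset.card_pos.mpr (Finset.nonempty_of_ne_empty hFe)
      have hμF : cexp (Aev n (m+1) t) (Ysum n C (m+1)) = μ := by
        rw [cexp_spec]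
        rw [← hF]
        have e2 : ∑ π ∈ F, Ysum n C (m+1) π = (F.card : ℝ) * μ := by
          rw [hFsum (Ysum n C (m+1))]
          calc ∑ a : S, ∑ π ∈ F.filter (fun π => φ π = a), Ysum n C (m+1) π
              = ∑ a : S, ((F.filter (fun π => φ π = a)).card : ℝ) * μ :=
                Finset.sum_congr rfl fun a _ => hsumμ a
            _ = (∑ a : S, ((F.filter (fun π => φ π = a)).card : ℝ)) * μ := by
                rw [Finset.sum_mul]
            _ = (F.card : ℝ) * μ := by rw [← hcardsum]
        rw [e2]
        exact mul_div_cancel_left₀ μ hFcardpos.ne'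
      -- per-fiber bound on the exponential sum
      have hfiber_bound : ∀ a : S,
          ∑ π ∈ F.filter (fun π => φ π = a), (2:ℝ) ^ (Ysum n C (m+1) π)
            ≤ ((F.filter (fun π => φ π = a)).card : ℝ) * Real.exp μ := by
        intro a
        by_cases hg : a ∈ t '' Set.Icc (m + 2) n
        · rw [fiber_empty a hg]; simp
        rw [fiber_eq a hg]
        by_cases hne : Finset.univ.filter (Aev n m (ta a)) = ∅
        · rw [hne]; simp
        obtain ⟨π₀, hπ₀⟩ := Finset.nonempty_of_ne_empty hne
        have hcpos : (0:ℝ) < ((Finset.univ.filter (Aev n m (ta a))).card : ℝ) := by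
          exact_mod_cast Finset.card_pos.mpr ⟨π₀, hπ₀⟩
        set d : ℝ := Dv π₀ with hd
        have hdnn : 0 ≤ d := hDnn π₀
        have hYd : ∀ π ∈ Finset.univ.filter (Aev n m (ta a)),
            Ysum n C (m+1) π = Ysum n C m π + d := by
          intro π hπ
          rw [hsplit π, hDconst a π hπ π₀ hπ₀]
        have hcexpYm : cexp (Aev n m (ta a)) (Ysum n C m) = μ - d := by
          rw [cexp_spec, div_eq_iff hcpos.ne']
          have e3 : ∑ π ∈ Finset.univ.filter (Aev n m (ta a)), Ysum n C m π
              = ∑ π ∈ Finset.univ.filter (Aev n m (ta a)), (Ysum n C (m+1) π - d) :=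
            Finset.sum_congr rfl fun π hπ => by rw [hYd π hπ]; ring
          rw [e3, Finset.sum_sub_distrib, hGsum a hg, Finset.sum_const, nsmul_eq_mul]
          ring
        calc ∑ π ∈ Finset.univ.filter (Aev n m (ta a)), (2:ℝ) ^ (Ysum n C (m+1) π)
            = ∑ π ∈ Finset.univ.filter (Aev n m (ta a)),
                (2:ℝ) ^ d * (2:ℝ) ^ (Ysum n C m π) := by
              refine Finset.sum_congr rfl fun π hπ => ?_
              rw [hYd π hπ, add_comm, Real.rpow_add (by norm_num : (0:ℝ) < 2)]
          _ = (2:ℝ) ^ d * ∑ π ∈ Finset.univ.filter (Aev n m (ta a)),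
                (2:ℝ) ^ (Ysum n C m π) := by rw [Finset.mul_sum]
          _ ≤ (2:ℝ) ^ d * (((Finset.univ.filter (Aev n m (ta a))).card : ℝ)
                * Real.exp (cexp (Aev n m (ta a)) (Ysum n C m))) :=
              mul_le_mul_of_nonneg_left (ih (by omega) (ta a) (injOn_ta a hg))
                (Real.rpow_nonneg (by norm_num) d)
          _ = ((Finset.univ.filter (Aev n m (ta a))).card : ℝ)
                * ((2:ℝ) ^ d * Real.exp (μ - d)) := by rw [hcexpYm]; ring
          _ ≤ ((Finset.univ.filter (Aev n m (ta a))).card : ℝ) * Real.exp μ := by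
              refine mul_le_mul_of_nonneg_left ?_ hcpos.le
              calc (2:ℝ) ^ d * Real.exp (μ - d)
                  ≤ Real.exp d * Real.exp (μ - d) :=
                    mul_le_mul_of_nonneg_right (two_rpow_le_exp d hdnn) (Real.exp_nonneg _)
                _ = Real.exp μ := by rw [← Real.exp_add]; ring_nf
      -- assemble
      rw [hμF]
      calc ∑ π ∈ F, (2:ℝ) ^ (Ysum n C (m+1) π)
          = ∑ a : S, ∑ π ∈ F.filter (fun π => φ π = a), (2:ℝ) ^ (Ysum n C (m+1) π) :=
            hFsum _
        _ ≤ ∑ a : S, ((F.filter (fun π => φ π = a)).card : ℝ) * Real.exp μ :=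
            Finset.sum_le_sum fun a _ => hfiber_bound a
        _ = (∑ a : S, ((F.filter (fun π => φ π = a)).card : ℝ)) * Real.exp μ := by
            rw [Finset.sum_mul]
        _ = (F.card : ℝ) * Real.exp μ := by rw [← hcardsum]


/-- for a suffix-determined family `(X i j)_{1 ≤ i < j ≤ n}` of
`{0,1}`-valued random variables on uniformly random bijections `π : S → {1,…,n}`
(encoded as `π : S ≃ Fin n`, priority of `s` being `(π s : ℕ) + 1`) satisfying
the averaging property, if `E[X] ≤ c·n` for some real `c > 0`, where
`X = ∑_{1 ≤ i < j ≤ n} X i j`, then for every real `β ≥ (c+1)/ln 2` one has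
`Pr[X ≥ β·n] ≤ e^{−n}`. -/
theorem stmt2
    {S : Type} [Fintype S] [DecidableEq S] (n : ℕ) (hn : 1 ≤ n)
    (hcard : Fintype.card S = n)
    (X : ℕ → ℕ → (S ≃ Fin n) → ℝ)
    (hX01 : ∀ i j π, 1 ≤ i → i < j → j ≤ n → X i j π = 0 ∨ X i j π = 1)
    -- suffix-determined
    (hsuffix : ∀ i j, 1 ≤ i → i < j → j ≤ n →
      ∀ π π' : S ≃ Fin n,
        (∀ k : Fin n, i ≤ (k : ℕ) + 1 → π.symm k = π'.symm k) →
        X i j π = X i j π')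
    -- column sums
    (C : ℕ → (S ≃ Fin n) → ℝ)
    (hC : ∀ i π, C i π = ∑ j ∈ Finset.Icc (i + 1) n, X i j π)
    -- averaging property
    (havg : ∀ m, 1 ≤ m → m ≤ n → ∀ t : ℕ → S,
      Set.InjOn t (Set.Icc (m + 1) n) →
      ∀ a b : S, a ∉ t '' Set.Icc (m + 1) n → b ∉ t '' Set.Icc (m + 1) n →
        cexp (fun π => (π a : ℕ) + 1 = m ∧
              ∀ k, m + 1 ≤ k → k ≤ n → (π (t k) : ℕ) + 1 = k)
            (fun π => ∑ i ∈ Finset.Icc 1 (min m (n - 1)), C i π)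
          = cexp (fun π => (π b : ℕ) + 1 = m ∧
              ∀ k, m + 1 ≤ k → k ≤ n → (π (t k) : ℕ) + 1 = k)
            (fun π => ∑ i ∈ Finset.Icc 1 (min m (n - 1)), C i π))
    (c : ℝ) (hc : 0 < c)
    (hEX : unifE (fun π => ∑ i ∈ Finset.Icc 1 (n - 1), ∑ j ∈ Finset.Icc (i + 1) n, X i j π)
      ≤ c * n) :
    ∀ β : ℝ, (c + 1) / Real.log 2 ≤ β →
      unifPr (fun π =>
          β * n ≤ ∑ i ∈ Finset.Icc 1 (n - 1), ∑ j ∈ Finset.Icc (i + 1) n, X i j π)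
        ≤ Real.exp (-(n : ℝ)) := by
  intro β hβ
  have hS : Nonempty S := by
    refine Fintype.card_pos_iff.mp ?_
    omega
  obtain ⟨s₀⟩ := hS
  have hNpos : (0:ℝ) < (Fintype.card (S ≃ Fin n) : ℝ) := by
    have : Nonempty (S ≃ Fin n) := ⟨Fintype.equivFinOfCardEq hcard⟩
    exact_mod_cast Fintype.card_pos
  set N : ℝ := (Fintype.card (S ≃ Fin n) : ℝ) with hN
  -- the total sum as a function
  set Xf : (S ≃ Fin n) → ℝ :=
    fun π => ∑ i ∈ Finset.Icc 1 (n - 1), ∑ j ∈ Finset.Icc (i + 1) n, X i j π with hXf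
  have hYX : ∀ π, Ysum n C n π = Xf π := by
    intro π
    rw [Ysum, min_eq_right (by omega), hXf]
    exact Finset.sum_congr rfl fun i _ => hC i π
  have huniv : Finset.univ.filter (Aev n n (fun _ => s₀)) = (Finset.univ : Finset (S ≃ Fin n)) := by
    ext π
    simp only [Finset.mem_filter, Finset.mem_univ, true_and, iff_true, Aev]
    intro k hk1 hk2
    omega
  have key := key_lemma n hn X hX01 hsuffix C hC havg n le_rfl (fun _ => s₀)
    (by intro x hx y hy _; simp only [Set.mem_Icc] at hx; omega)
  rw [huniv] at key
  have hcexp_univ : cexp (Aev n n (fun _ => s₀)) (Ysum n C n) = unifE Xf := by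
    show (∑ x ∈ Finset.univ.filter (Aev n n (fun _ => s₀)), Ysum n C n x)
        / ((Finset.univ.filter (Aev n n (fun _ => s₀))).card : ℝ) = _
    rw [huniv, unifE]
    rw [Finset.sum_congr rfl fun π _ => hYX π, Finset.card_univ]
  rw [hcexp_univ, Finset.card_univ] at key
  -- key : ∑ π, 2 ^ Ysum n C n π ≤ N * exp (unifE Xf)
  have hmgf : ∑ π : S ≃ Fin n, (2:ℝ) ^ (Xf π) ≤ N * Real.exp (c * n) := by
    calc ∑ π : S ≃ Fin n, (2:ℝ) ^ (Xf π)
        = ∑ π : S ≃ Fin n, (2:ℝ) ^ (Ysum n C n π) := by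
          exact Finset.sum_congr rfl fun π _ => by rw [hYX π]
      _ ≤ N * Real.exp (unifE Xf) := key
      _ ≤ N * Real.exp (c * n) := by
          refine mul_le_mul_of_nonneg_left (Real.exp_le_exp.mpr ?_) hNpos.le
          exact hEX
  -- Markov
  have hl2 : (0:ℝ) < Real.log 2 := Real.log_pos (by norm_num)
  have hβ2 : c + 1 ≤ β * Real.log 2 := by
    rw [div_le_iff₀ hl2] at hβ
    exact hβ
  set P := Finset.univ.filter (fun π : S ≃ Fin n => β * n ≤ Xf π) with hP
  have hpoint : ∀ π ∈ P, Real.exp ((c + 1) * n) ≤ (2:ℝ) ^ (Xf π) := by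
    intro π hπ
    have hx : β * n ≤ Xf π := (Finset.mem_filter.mp hπ).2
    rw [Real.rpow_def_of_pos (by norm_num : (0:ℝ) < 2)]
    refine Real.exp_le_exp.mpr ?_
    have hn' : (0:ℝ) ≤ (n:ℝ) := Nat.cast_nonneg n
    nlinarith
  have hchain : (P.card : ℝ) * Real.exp ((c + 1) * n) ≤ N * Real.exp (c * n) := by
    calc (P.card : ℝ) * Real.exp ((c + 1) * n)
        = ∑ _π ∈ P, Real.exp ((c + 1) * n) := by
          rw [Finset.sum_const, nsmul_eq_mul]
      _ ≤ ∑ π ∈ P, (2:ℝ) ^ (Xf π) := Finset.sum_le_sum hpoint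
      _ ≤ ∑ π : S ≃ Fin n, (2:ℝ) ^ (Xf π) := by
          refine Finset.sum_le_sum_of_subset_of_nonneg (Finset.subset_univ P) ?_
          intro π _ _
          exact Real.rpow_nonneg (by norm_num) _
      _ ≤ N * Real.exp (c * n) := hmgf
  have hsplitexp : Real.exp (c * n) = Real.exp (-(n:ℝ)) * Real.exp ((c + 1) * n) := by
    rw [← Real.exp_add]
    ring_nf
  have hcardP : (P.card : ℝ) ≤ N * Real.exp (-(n:ℝ)) := by
    have := hchain
    rw [hsplitexp] at this
    have hE : (0:ℝ) < Real.exp ((c + 1) * n) := Real.exp_pos _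
    nlinarith
  show ((Finset.univ.filter _).card : ℝ) / (Fintype.card (S ≃ Fin n) : ℝ) ≤ Real.exp (-(n:ℝ))
  rw [div_le_iff₀ hNpos]
  calc ((Finset.univ.filter (fun π : S ≃ Fin n => β * n ≤ Xf π)).card : ℝ)
      = (P.card : ℝ) := by rw [hP]
    _ ≤ N * Real.exp (-(n:ℝ)) := hcardP
    _ = Real.exp (-(n:ℝ)) * N := by ring
end

section
/- Let (Y_{h,i,j})_{1 ≤ h < i < j ≤ n} be a suffix-determined family of {0,1}-valued random variables on uniformly random bijections π : S → {1,…,n} that satisfies the averaging property. Then the random variable Y = Σ_{1≤h<i<j≤n} Y_{h,i,j} has an exponential upper tail: for every real T > 0, Pr[Y ≥ T] ≤ exp(E[Y] − T·ln 2). -/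
open scoped Classical BigOperators

noncomputable def cfilt {α : Type} [Fintype α] (A : α → Prop) : Finset α :=
  Finset.univ.filter A

lemma cexp_def {α : Type} [Fintype α] (A : α → Prop) (f : α → ℝ) :
    cexp A f = (∑ x ∈ cfilt A, f x) / ((cfilt A).card : ℝ) := rfl

lemma mem_cfilt {α : Type} [Fintype α] {A : α → Prop} {x : α} : x ∈ cfilt A ↔ A x := by
  simp [cfilt]

lemma unifPr_def {α : Type} [Fintype α] (A : α → Prop) :
    unifPr A = ((cfilt A).card : ℝ) / (Fintype.card α : ℝ) := rfl

lemma unifE_def {α : Type} [Fintype α] (f : α → ℝ) :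
    unifE f = (∑ x : α, f x) / (Fintype.card α : ℝ) := rfl

private lemma keylem {S : Type} [Fintype S] [DecidableEq S] (n : ℕ) (hn : 1 ≤ n)
    (hcard : Fintype.card S = n)
    (C : ℕ → (S ≃ Fin n) → ℝ)
    (hCnn : ∀ m (π : S ≃ Fin n), 1 ≤ m → 0 ≤ C m π)
    (hCsuf : ∀ m, 1 ≤ m → ∀ π π' : S ≃ Fin n,
      (∀ k : Fin n, m ≤ (k : ℕ) + 1 → π.symm k = π'.symm k) → C m π = C m π')
    (havg : ∀ m, 1 ≤ m → m ≤ n → ∀ t : ℕ → S,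
      Set.InjOn t (Set.Icc (m + 1) n) →
      ∀ a b : S, a ∉ t '' Set.Icc (m + 1) n → b ∉ t '' Set.Icc (m + 1) n →
        cexp (fun π => (π a : ℕ) + 1 = m ∧
              ∀ k, m + 1 ≤ k → k ≤ n → (π (t k) : ℕ) + 1 = k)
            (fun π => ∑ h ∈ Finset.Icc 1 (min m (n - 2)), C h π)
          = cexp (fun π => (π b : ℕ) + 1 = m ∧
              ∀ k, m + 1 ≤ k → k ≤ n → (π (t k) : ℕ) + 1 = k)
            (fun π => ∑ h ∈ Finset.Icc 1 (min m (n - 2)), C h π)) :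
    ∀ m, m ≤ n → ∀ t : ℕ → S, Set.InjOn t (Set.Icc (m + 1) n) →
      (∑ π ∈ cfilt
          (fun π : S ≃ Fin n => ∀ k, m + 1 ≤ k → k ≤ n → (π (t k) : ℕ) + 1 = k),
          Real.exp (Real.log 2 * ∑ h ∈ Finset.Icc 1 (min m (n - 2)), C h π))
        ≤ ((cfilt
            (fun π : S ≃ Fin n => ∀ k, m + 1 ≤ k → k ≤ n → (π (t k) : ℕ) + 1 = k)).card : ℝ) *
          Real.exp (cexp
            (fun π : S ≃ Fin n => ∀ k, m + 1 ≤ k → k ≤ n → (π (t k) : ℕ) + 1 = k)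
            (fun π => ∑ h ∈ Finset.Icc 1 (min m (n - 2)), C h π)) := by
  intro m
  induction m with
  | zero =>
      intro _ t _
      have h0 : Finset.Icc 1 (min 0 (n - 2)) = ∅ := by simp
      simp only [h0, Finset.sum_empty, mul_zero, Real.exp_zero, cexp]
      simp only [Finset.sum_const, nsmul_eq_mul, mul_one, Finset.sum_const_zero, zero_div,
        Real.exp_zero]
      rw [mul_zero, zero_div, Real.exp_zero, mul_one]
  | succ m ih =>
      intro hmn t ht
      have hmlt : m < n := hmn
      have hlog1 : Real.log 2 ≤ 1 := by
        have := Real.log_two_lt_d9; linarith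
      set R : Finset S := Finset.univ \ Finset.image t (Finset.Icc (m + 2) n) with hR
      have hRne : R.Nonempty := by
        rw [hR, Finset.sdiff_nonempty]
        intro hsub
        have h1 : (Finset.univ : Finset S).card ≤ (Finset.image t (Finset.Icc (m + 2) n)).card :=
          Finset.card_le_card hsub
        have h2 : (Finset.image t (Finset.Icc (m + 2) n)).card ≤ (Finset.Icc (m + 2) n).card :=
          Finset.card_image_le
        rw [Finset.card_univ, hcard] at h1
        rw [Nat.card_Icc] at h2
        omega
      have hnotmem : ∀ a ∈ R, a ∉ t '' Set.Icc (m + 1 + 1) n := by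
        intro a ha hmem
        obtain ⟨k, hk, hke⟩ := hmem
        rw [Set.mem_Icc] at hk
        rw [hR, Finset.mem_sdiff] at ha
        exact ha.2 (Finset.mem_image.2 ⟨k, Finset.mem_Icc.2 ⟨by omega, hk.2⟩, hke⟩)
      have hinj' : ∀ a ∈ R, Set.InjOn (Function.update t (m + 1) a) (Set.Icc (m + 1) n) := by
        intro a ha x hx y hy hxy
        simp only [Set.mem_Icc] at hx hy
        rcases eq_or_ne x (m + 1) with rfl | hxm
        · rcases eq_or_ne y (m + 1) with rfl | hym
          · rfl
          · exfalso
            rw [Function.update_self, Function.update_of_ne hym] at hxy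
            exact hnotmem a ha ⟨y, Set.mem_Icc.2 ⟨by omega, hy.2⟩, hxy.symm⟩
        · rcases eq_or_ne y (m + 1) with rfl | hym
          · exfalso
            rw [Function.update_of_ne hxm, Function.update_self] at hxy
            exact hnotmem a ha ⟨x, Set.mem_Icc.2 ⟨by omega, hx.2⟩, hxy⟩
          · rw [Function.update_of_ne hxm, Function.update_of_ne hym] at hxy
            exact ht (Set.mem_Icc.2 ⟨by omega, hx.2⟩) (Set.mem_Icc.2 ⟨by omega, hy.2⟩) hxy
      have hfe : ∀ a : S,
          cfilt (fun π : S ≃ Fin n =>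
            ∀ k, m + 1 ≤ k → k ≤ n → (π (Function.update t (m + 1) a k) : ℕ) + 1 = k)
          = cfilt (fun π : S ≃ Fin n =>
            (π a : ℕ) + 1 = m + 1 ∧ ∀ k, m + 1 + 1 ≤ k → k ≤ n → (π (t k) : ℕ) + 1 = k) := by
        intro a
        ext π
        simp only [mem_cfilt]
        constructor
        · intro H
          refine ⟨?_, fun k hk1 hk2 => ?_⟩
          · have := H (m + 1) le_rfl hmn
            rwa [Function.update_self] at this
          · have := H k (by omega) hk2
            rwa [Function.update_of_ne (by omega)] at this
        · rintro ⟨H1, H2⟩ k hk1 hk2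
          rcases eq_or_ne k (m + 1) with rfl | hkm
          · rwa [Function.update_self]
          · rw [Function.update_of_ne hkm]
            exact H2 k (by omega) hk2
      have hpart : cfilt (fun π : S ≃ Fin n =>
            ∀ k, m + 1 + 1 ≤ k → k ≤ n → (π (t k) : ℕ) + 1 = k)
          = R.biUnion (fun a => cfilt (fun π : S ≃ Fin n =>
            (π a : ℕ) + 1 = m + 1 ∧ ∀ k, m + 1 + 1 ≤ k → k ≤ n → (π (t k) : ℕ) + 1 = k)) := by
        ext π
        simp only [mem_cfilt, Finset.mem_biUnion]
        constructor
        · intro H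
          refine ⟨π.symm ⟨m, hmlt⟩, ?_, ?_, H⟩
          · rw [hR, Finset.mem_sdiff]
            refine ⟨Finset.mem_univ _, fun hmem => ?_⟩
            obtain ⟨k, hk, hke⟩ := Finset.mem_image.1 hmem
            rw [Finset.mem_Icc] at hk
            have h3 := H k hk.1 hk.2
            rw [hke, Equiv.apply_symm_apply] at h3
            simp only [] at h3
            omega
          · rw [Equiv.apply_symm_apply]
        · rintro ⟨a, _, _, H2⟩
          exact H2
      have hdisj : (↑R : Set S).PairwiseDisjoint (fun a => cfilt
          (fun π : S ≃ Fin n =>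
            (π a : ℕ) + 1 = m + 1 ∧ ∀ k, m + 1 + 1 ≤ k → k ≤ n → (π (t k) : ℕ) + 1 = k)) := by
        intro a _ b _ hab
        simp only [Function.onFun]
        rw [Finset.disjoint_left]
        intro π hπa hπb
        simp only [mem_cfilt] at hπa hπb
        exact hab (π.injective (Fin.ext (by omega : ((π a : ℕ)) = ((π b : ℕ)))))
      have hdisj' : ∀ x ∈ R, ∀ y ∈ R, x ≠ y → Disjoint
          (cfilt (fun π : S ≃ Fin n =>
            (π x : ℕ) + 1 = m + 1 ∧ ∀ k, m + 1 + 1 ≤ k → k ≤ n → (π (t k) : ℕ) + 1 = k))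
          (cfilt (fun π : S ≃ Fin n =>
            (π y : ℕ) + 1 = m + 1 ∧ ∀ k, m + 1 + 1 ≤ k → k ≤ n → (π (t k) : ℕ) + 1 = k)) :=
        fun x hx y hy h => hdisj hx hy h
      obtain ⟨a₀, ha₀⟩ := hRne
      have hmu : ∀ a ∈ R, cexp (fun π : S ≃ Fin n =>
            (π a : ℕ) + 1 = m + 1 ∧ ∀ k, m + 1 + 1 ≤ k → k ≤ n → (π (t k) : ℕ) + 1 = k)
            (fun π => ∑ h ∈ Finset.Icc 1 (min (m + 1) (n - 2)), C h π)
          = cexp (fun π : S ≃ Fin n =>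
            (π a₀ : ℕ) + 1 = m + 1 ∧ ∀ k, m + 1 + 1 ≤ k → k ≤ n → (π (t k) : ℕ) + 1 = k)
            (fun π => ∑ h ∈ Finset.Icc 1 (min (m + 1) (n - 2)), C h π) := by
        intro a ha
        exact havg (m + 1) (by omega) hmn t ht a a₀ (hnotmem a ha) (hnotmem a₀ ha₀)
      set μ : ℝ := cexp (fun π : S ≃ Fin n =>
            (π a₀ : ℕ) + 1 = m + 1 ∧ ∀ k, m + 1 + 1 ≤ k → k ≤ n → (π (t k) : ℕ) + 1 = k)
            (fun π => ∑ h ∈ Finset.Icc 1 (min (m + 1) (n - 2)), C h π) with hμ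
      have hper : ∀ a ∈ R,
          (∑ π ∈ cfilt (fun π : S ≃ Fin n =>
              (π a : ℕ) + 1 = m + 1 ∧ ∀ k, m + 1 + 1 ≤ k → k ≤ n → (π (t k) : ℕ) + 1 = k),
            Real.exp (Real.log 2 * ∑ h ∈ Finset.Icc 1 (min (m + 1) (n - 2)), C h π))
          ≤ ((cfilt (fun π : S ≃ Fin n =>
              (π a : ℕ) + 1 = m + 1 ∧ ∀ k, m + 1 + 1 ≤ k → k ≤ n → (π (t k) : ℕ) + 1 = k)).card : ℝ)
            * Real.exp μ := by
        intro a ha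
        by_cases hne : (cfilt (fun π : S ≃ Fin n =>
            (π a : ℕ) + 1 = m + 1 ∧ ∀ k, m + 1 + 1 ≤ k → k ≤ n → (π (t k) : ℕ) + 1 = k)).Nonempty
        · obtain ⟨π₀, hπ₀mem⟩ := hne
          have hπ₀ := mem_cfilt.1 hπ₀mem
          have hsymm : ∀ π : S ≃ Fin n,
              ((π a : ℕ) + 1 = m + 1 ∧ ∀ k, m + 1 + 1 ≤ k → k ≤ n → (π (t k) : ℕ) + 1 = k) →
              ∀ k : Fin n, m + 1 ≤ (k : ℕ) + 1 →
                π.symm k = (if (k : ℕ) = m then a else t ((k : ℕ) + 1)) := by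
            intro π hπ k hk
            rcases eq_or_ne ((k : ℕ)) m with hkm | hkm
            · rw [if_pos hkm]
              have h5 : π a = k := Fin.ext (by omega)
              exact (Equiv.symm_apply_eq _).2 h5.symm
            · rw [if_neg hkm]
              have hkn : (k : ℕ) + 1 ≤ n := k.isLt
              have h3 := hπ.2 ((k : ℕ) + 1) (by omega) hkn
              have h4 : π (t ((k : ℕ) + 1)) = k := Fin.ext (by omega)
              exact (Equiv.symm_apply_eq _).2 h4.symm
          have hdiffconst : ∀ π : S ≃ Fin n,
              ((π a : ℕ) + 1 = m + 1 ∧ ∀ k, m + 1 + 1 ≤ k → k ≤ n → (π (t k) : ℕ) + 1 = k) →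
              (∑ h ∈ Finset.Icc 1 (min (m + 1) (n - 2)), C h π)
                = (∑ h ∈ Finset.Icc 1 (min m (n - 2)), C h π)
                  + (if m + 1 ≤ n - 2 then C (m + 1) π₀ else 0) := by
            intro π hπ
            by_cases hle : m + 1 ≤ n - 2
            · rw [if_pos hle, min_eq_left hle, min_eq_left (by omega : m ≤ n - 2)]
              rw [Finset.sum_Icc_succ_top (by omega : 1 ≤ m + 1)]
              have hCeq : C (m + 1) π = C (m + 1) π₀ := by
                apply hCsuf (m + 1) (by omega)
                intro k hk
                rw [hsymm π hπ k hk, hsymm π₀ hπ₀ k hk]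
              rw [hCeq]
            · rw [if_neg hle]
              have hmm : min (m + 1) (n - 2) = min m (n - 2) := by omega
              rw [hmm, add_zero]
          have hc0 : (0:ℝ) ≤ (if m + 1 ≤ n - 2 then C (m + 1) π₀ else 0) := by
            split
            · exact hCnn (m + 1) π₀ (by omega)
            · exact le_rfl
          have hNpos : (0:ℝ) < ((cfilt (fun π : S ≃ Fin n =>
              (π a : ℕ) + 1 = m + 1 ∧ ∀ k, m + 1 + 1 ≤ k → k ≤ n → (π (t k) : ℕ) + 1 = k)).card : ℝ) := by
            exact_mod_cast Finset.card_pos.2 ⟨π₀, hπ₀mem⟩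
          have hIH := ih (by omega) (Function.update t (m + 1) a) (hinj' a ha)
          have hcexp_eq : cexp (fun π : S ≃ Fin n =>
                ∀ k, m + 1 ≤ k → k ≤ n → (π (Function.update t (m + 1) a k) : ℕ) + 1 = k)
                (fun π => ∑ h ∈ Finset.Icc 1 (min m (n - 2)), C h π)
              = cexp (fun π : S ≃ Fin n =>
                (π a : ℕ) + 1 = m + 1 ∧ ∀ k, m + 1 + 1 ≤ k → k ≤ n → (π (t k) : ℕ) + 1 = k)
                (fun π => ∑ h ∈ Finset.Icc 1 (min m (n - 2)), C h π) := by
            simp only [cexp_def]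
            rw [hfe a]
          rw [hfe a, hcexp_eq] at hIH
          have hcm : cexp (fun π : S ≃ Fin n =>
                (π a : ℕ) + 1 = m + 1 ∧ ∀ k, m + 1 + 1 ≤ k → k ≤ n → (π (t k) : ℕ) + 1 = k)
                (fun π => ∑ h ∈ Finset.Icc 1 (min m (n - 2)), C h π)
              = μ - (if m + 1 ≤ n - 2 then C (m + 1) π₀ else 0) := by
            have hz := hmu a ha
            simp only [cexp_def] at hz ⊢
            have h5 : (∑ π ∈ cfilt (fun π : S ≃ Fin n =>
                  (π a : ℕ) + 1 = m + 1 ∧ ∀ k, m + 1 + 1 ≤ k → k ≤ n → (π (t k) : ℕ) + 1 = k),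
                (∑ h ∈ Finset.Icc 1 (min m (n - 2)), C h π))
              = (∑ π ∈ cfilt (fun π : S ≃ Fin n =>
                  (π a : ℕ) + 1 = m + 1 ∧ ∀ k, m + 1 + 1 ≤ k → k ≤ n → (π (t k) : ℕ) + 1 = k),
                ((∑ h ∈ Finset.Icc 1 (min (m + 1) (n - 2)), C h π)
                  - (if m + 1 ≤ n - 2 then C (m + 1) π₀ else 0))) := by
              refine Finset.sum_congr rfl fun π hπ => ?_
              have hπ' := mem_cfilt.1 hπ
              have h6 := hdiffconst π hπ'
              linarith
            rw [h5, Finset.sum_sub_distrib, Finset.sum_const, nsmul_eq_mul, sub_div, hz,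
              mul_div_cancel_left₀ _ (ne_of_gt hNpos)]
          rw [hcm] at hIH
          calc (∑ π ∈ cfilt (fun π : S ≃ Fin n =>
                  (π a : ℕ) + 1 = m + 1 ∧ ∀ k, m + 1 + 1 ≤ k → k ≤ n → (π (t k) : ℕ) + 1 = k),
                Real.exp (Real.log 2 * ∑ h ∈ Finset.Icc 1 (min (m + 1) (n - 2)), C h π))
              = Real.exp (Real.log 2 * (if m + 1 ≤ n - 2 then C (m + 1) π₀ else 0))
                * (∑ π ∈ cfilt (fun π : S ≃ Fin n =>
                  (π a : ℕ) + 1 = m + 1 ∧ ∀ k, m + 1 + 1 ≤ k → k ≤ n → (π (t k) : ℕ) + 1 = k),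
                  Real.exp (Real.log 2 * ∑ h ∈ Finset.Icc 1 (min m (n - 2)), C h π)) := by
                rw [Finset.mul_sum]
                refine Finset.sum_congr rfl fun π hπ => ?_
                have hπ' := mem_cfilt.1 hπ
                rw [hdiffconst π hπ', mul_add, Real.exp_add]
                ring
            _ ≤ Real.exp (Real.log 2 * (if m + 1 ≤ n - 2 then C (m + 1) π₀ else 0))
                * (((cfilt (fun π : S ≃ Fin n =>
                  (π a : ℕ) + 1 = m + 1 ∧ ∀ k, m + 1 + 1 ≤ k → k ≤ n → (π (t k) : ℕ) + 1 = k)).card : ℝ)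
                  * Real.exp (μ - (if m + 1 ≤ n - 2 then C (m + 1) π₀ else 0))) :=
                mul_le_mul_of_nonneg_left hIH (Real.exp_nonneg _)
            _ = ((cfilt (fun π : S ≃ Fin n =>
                  (π a : ℕ) + 1 = m + 1 ∧ ∀ k, m + 1 + 1 ≤ k → k ≤ n → (π (t k) : ℕ) + 1 = k)).card : ℝ)
                * Real.exp ((μ - (if m + 1 ≤ n - 2 then C (m + 1) π₀ else 0))
                    + Real.log 2 * (if m + 1 ≤ n - 2 then C (m + 1) π₀ else 0)) := by
                rw [Real.exp_add]
                ring
            _ ≤ ((cfilt (fun π : S ≃ Fin n =>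
                  (π a : ℕ) + 1 = m + 1 ∧ ∀ k, m + 1 + 1 ≤ k → k ≤ n → (π (t k) : ℕ) + 1 = k)).card : ℝ)
                * Real.exp μ := by
                refine mul_le_mul_of_nonneg_left ?_ (Nat.cast_nonneg _)
                refine Real.exp_le_exp.2 ?_
                have h8 : Real.log 2 * (if m + 1 ≤ n - 2 then C (m + 1) π₀ else 0)
                    ≤ 1 * (if m + 1 ≤ n - 2 then C (m + 1) π₀ else 0) :=
                  mul_le_mul_of_nonneg_right hlog1 hc0
                linarith
        · rw [Finset.not_nonempty_iff_eq_empty] at hne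
          rw [hne]
          simp
      by_cases hNtot : (cfilt (fun π : S ≃ Fin n =>
          ∀ k, m + 1 + 1 ≤ k → k ≤ n → (π (t k) : ℕ) + 1 = k)).card = 0
      · rw [Finset.card_eq_zero] at hNtot
        rw [hNtot]
        simp
      · have hcexpP : cexp (fun π : S ≃ Fin n =>
              ∀ k, m + 1 + 1 ≤ k → k ≤ n → (π (t k) : ℕ) + 1 = k)
            (fun π => ∑ h ∈ Finset.Icc 1 (min (m + 1) (n - 2)), C h π) = μ := by
          simp only [cexp_def]
          rw [hpart, Finset.sum_biUnion hdisj, Finset.card_biUnion hdisj']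
          have h7 : ∀ a ∈ R, (∑ π ∈ cfilt (fun π : S ≃ Fin n =>
                (π a : ℕ) + 1 = m + 1 ∧ ∀ k, m + 1 + 1 ≤ k → k ≤ n → (π (t k) : ℕ) + 1 = k),
              (∑ h ∈ Finset.Icc 1 (min (m + 1) (n - 2)), C h π))
            = (((cfilt (fun π : S ≃ Fin n =>
                (π a : ℕ) + 1 = m + 1 ∧ ∀ k, m + 1 + 1 ≤ k → k ≤ n → (π (t k) : ℕ) + 1 = k)).card : ℝ))
              * μ := by
            intro a ha
            rcases Nat.eq_zero_or_pos (cfilt (fun π : S ≃ Fin n =>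
                (π a : ℕ) + 1 = m + 1 ∧ ∀ k, m + 1 + 1 ≤ k → k ≤ n → (π (t k) : ℕ) + 1 = k)).card with h0 | hpos
            · rw [Finset.card_eq_zero] at h0
              rw [h0]
              simp
            · have hz := hmu a ha
              simp only [cexp_def] at hz
              have hne0 : (((cfilt (fun π : S ≃ Fin n =>
                  (π a : ℕ) + 1 = m + 1 ∧ ∀ k, m + 1 + 1 ≤ k → k ≤ n → (π (t k) : ℕ) + 1 = k)).card : ℝ)) ≠ 0 := by
                exact_mod_cast Nat.pos_iff_ne_zero.1 hpos
              rw [div_eq_iff hne0] at hz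
              rw [hz, mul_comm]
          rw [Finset.sum_congr rfl h7, ← Finset.sum_mul]
          push_cast
          rw [mul_comm, mul_div_assoc, div_self, mul_one]
          have : ((cfilt (fun π : S ≃ Fin n =>
              ∀ k, m + 1 + 1 ≤ k → k ≤ n → (π (t k) : ℕ) + 1 = k)).card : ℝ) ≠ 0 := by
            exact_mod_cast hNtot
          rw [hpart, Finset.card_biUnion hdisj'] at this
          push_cast at this
          exact this
        rw [hcexpP, hpart, Finset.sum_biUnion hdisj, Finset.card_biUnion hdisj', Nat.cast_sum]
        calc (∑ a ∈ R, ∑ π ∈ cfilt (fun π : S ≃ Fin n =>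
                (π a : ℕ) + 1 = m + 1 ∧ ∀ k, m + 1 + 1 ≤ k → k ≤ n → (π (t k) : ℕ) + 1 = k),
              Real.exp (Real.log 2 * ∑ h ∈ Finset.Icc 1 (min (m + 1) (n - 2)), C h π))
            ≤ ∑ a ∈ R, (((cfilt (fun π : S ≃ Fin n =>
                (π a : ℕ) + 1 = m + 1 ∧ ∀ k, m + 1 + 1 ≤ k → k ≤ n → (π (t k) : ℕ) + 1 = k)).card : ℝ)
              * Real.exp μ) := Finset.sum_le_sum hper
          _ = (∑ a ∈ R, ((cfilt (fun π : S ≃ Fin n =>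
                (π a : ℕ) + 1 = m + 1 ∧ ∀ k, m + 1 + 1 ≤ k → k ≤ n → (π (t k) : ℕ) + 1 = k)).card : ℝ))
              * Real.exp μ := by
              rw [Finset.sum_mul]


/-- a suffix-determined family `(Y h i j)_{1 ≤ h < i < j ≤ n}` of
`{0,1}`-valued random variables on uniformly random bijections `π : S → {1,…,n}`
(encoded as `π : S ≃ Fin n`, priority of `s` being `(π s : ℕ) + 1`) satisfying
the averaging property has an exponential upper tail for
`Y = ∑_{1 ≤ h < i < j ≤ n} Y h i j`: for every real `T > 0`,
`Pr[Y ≥ T] ≤ exp (E[Y] − T · ln 2)`. -/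
theorem stmt3
    {S : Type} [Fintype S] [DecidableEq S] (n : ℕ) (hn : 1 ≤ n)
    (hcard : Fintype.card S = n)
    (Y : ℕ → ℕ → ℕ → (S ≃ Fin n) → ℝ)
    (hY01 : ∀ h i j π, 1 ≤ h → h < i → i < j → j ≤ n →
      Y h i j π = 0 ∨ Y h i j π = 1)
    -- suffix-determined: `Y h i j` depends only on the elements of priorities `h, …, n`
    (hsuffix : ∀ h i j, 1 ≤ h → h < i → i < j → j ≤ n →
      ∀ π π' : S ≃ Fin n,
        (∀ k : Fin n, h ≤ (k : ℕ) + 1 → π.symm k = π'.symm k) →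
        Y h i j π = Y h i j π')
    -- column sums `C h = ∑_{h < i < j ≤ n} Y h i j`
    (C : ℕ → (S ≃ Fin n) → ℝ)
    (hC : ∀ h π, C h π =
      ∑ i ∈ Finset.Icc (h + 1) n, ∑ j ∈ Finset.Icc (i + 1) n, Y h i j π)
    -- averaging property
    (havg : ∀ m, 1 ≤ m → m ≤ n → ∀ t : ℕ → S,
      Set.InjOn t (Set.Icc (m + 1) n) →
      ∀ a b : S, a ∉ t '' Set.Icc (m + 1) n → b ∉ t '' Set.Icc (m + 1) n →
        cexp (fun π => (π a : ℕ) + 1 = m ∧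
              ∀ k, m + 1 ≤ k → k ≤ n → (π (t k) : ℕ) + 1 = k)
            (fun π => ∑ h ∈ Finset.Icc 1 (min m (n - 2)), C h π)
          = cexp (fun π => (π b : ℕ) + 1 = m ∧
              ∀ k, m + 1 ≤ k → k ≤ n → (π (t k) : ℕ) + 1 = k)
            (fun π => ∑ h ∈ Finset.Icc 1 (min m (n - 2)), C h π)) :
    ∀ T : ℝ, 0 < T →
      unifPr (fun π =>
          T ≤ ∑ h ∈ Finset.Icc 1 (n - 2), ∑ i ∈ Finset.Icc (h + 1) n,
                ∑ j ∈ Finset.Icc (i + 1) n, Y h i j π)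
        ≤ Real.exp
            (unifE (fun π => ∑ h ∈ Finset.Icc 1 (n - 2), ∑ i ∈ Finset.Icc (h + 1) n,
                ∑ j ∈ Finset.Icc (i + 1) n, Y h i j π)
              - T * Real.log 2) := by
  intro T hT
  have hL : (0:ℝ) < Real.log 2 := Real.log_pos (by norm_num)
  have hCnn : ∀ m (π : S ≃ Fin n), 1 ≤ m → 0 ≤ C m π := by
    intro m π hm
    rw [hC]
    refine Finset.sum_nonneg fun i hi => Finset.sum_nonneg fun j hj => ?_
    rw [Finset.mem_Icc] at hi hj
    rcases hY01 m i j π hm (by omega) (by omega) hj.2 with h | h <;> rw [h] <;> norm_num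
  have hCsuf : ∀ m, 1 ≤ m → ∀ π π' : S ≃ Fin n,
      (∀ k : Fin n, m ≤ (k : ℕ) + 1 → π.symm k = π'.symm k) → C m π = C m π' := by
    intro m hm π π' hs
    rw [hC, hC]
    refine Finset.sum_congr rfl fun i hi => Finset.sum_congr rfl fun j hj => ?_
    rw [Finset.mem_Icc] at hi hj
    exact hsuffix m i j hm (by omega) (by omega) hj.2 π π' hs
  have hS : Nonempty S := by
    rw [← Fintype.card_pos_iff, hcard]; omega
  obtain ⟨s₀⟩ := hS
  have hEne : Nonempty (S ≃ Fin n) := ⟨Fintype.equivFinOfCardEq hcard⟩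
  have hEpos : (0:ℝ) < (Fintype.card (S ≃ Fin n) : ℝ) := by
    exact_mod_cast Fintype.card_pos
  have hinj0 : Set.InjOn (fun _ : ℕ => s₀) (Set.Icc (n + 1) n) := by
    intro x hx y hy _
    rw [Set.mem_Icc] at hx
    omega
  have K := keylem n hn hcard C hCnn hCsuf havg n le_rfl (fun _ => s₀) hinj0
  rw [cexp_def] at K
  beta_reduce at K
  have htriv : cfilt (fun π : S ≃ Fin n =>
      ∀ k, n + 1 ≤ k → k ≤ n → (π s₀ : ℕ) + 1 = k) = Finset.univ := by
    ext π
    simp only [mem_cfilt, Finset.mem_univ, iff_true]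
    intro k hk1 hk2
    omega
  rw [htriv, Finset.card_univ] at K
  have hmin : min n (n - 2) = n - 2 := min_eq_right (Nat.sub_le n 2)
  rw [hmin] at K
  have hFs : ∀ π : S ≃ Fin n, (∑ h ∈ Finset.Icc 1 (n - 2), C h π)
      = ∑ h ∈ Finset.Icc 1 (n - 2), ∑ i ∈ Finset.Icc (h + 1) n, ∑ j ∈ Finset.Icc (i + 1) n, Y h i j π := fun π => Finset.sum_congr rfl fun h _ => hC h π
  simp only [hFs] at K
  rw [unifPr_def, unifE_def, div_le_iff₀ hEpos]
  calc ((cfilt (fun π : S ≃ Fin n => T ≤ ∑ h ∈ Finset.Icc 1 (n - 2), ∑ i ∈ Finset.Icc (h + 1) n, ∑ j ∈ Finset.Icc (i + 1) n, Y h i j π)).card : ℝ)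
      = ∑ π ∈ cfilt (fun π : S ≃ Fin n => T ≤ ∑ h ∈ Finset.Icc 1 (n - 2), ∑ i ∈ Finset.Icc (h + 1) n, ∑ j ∈ Finset.Icc (i + 1) n, Y h i j π), (1:ℝ) := by
        rw [Finset.sum_const, nsmul_eq_mul, mul_one]
    _ ≤ ∑ π ∈ cfilt (fun π : S ≃ Fin n => T ≤ ∑ h ∈ Finset.Icc 1 (n - 2), ∑ i ∈ Finset.Icc (h + 1) n, ∑ j ∈ Finset.Icc (i + 1) n, Y h i j π),
          Real.exp (Real.log 2 * ((∑ h ∈ Finset.Icc 1 (n - 2), ∑ i ∈ Finset.Icc (h + 1) n, ∑ j ∈ Finset.Icc (i + 1) n, Y h i j π) - T)) := by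
        refine Finset.sum_le_sum fun π hπ => ?_
        have hTπ := mem_cfilt.1 hπ
        have h0 : 0 ≤ Real.log 2 * ((∑ h ∈ Finset.Icc 1 (n - 2), ∑ i ∈ Finset.Icc (h + 1) n, ∑ j ∈ Finset.Icc (i + 1) n, Y h i j π) - T) :=
          mul_nonneg hL.le (by linarith)
        exact Real.one_le_exp h0
    _ ≤ ∑ π : S ≃ Fin n, Real.exp (Real.log 2 * ((∑ h ∈ Finset.Icc 1 (n - 2), ∑ i ∈ Finset.Icc (h + 1) n, ∑ j ∈ Finset.Icc (i + 1) n, Y h i j π) - T)) :=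
        Finset.sum_le_sum_of_subset_of_nonneg (Finset.subset_univ _)
          (fun _ _ _ => (Real.exp_pos _).le)
    _ = Real.exp (-(T * Real.log 2)) * ∑ π : S ≃ Fin n, Real.exp (Real.log 2 * (∑ h ∈ Finset.Icc 1 (n - 2), ∑ i ∈ Finset.Icc (h + 1) n, ∑ j ∈ Finset.Icc (i + 1) n, Y h i j π)) := by
        rw [Finset.mul_sum]
        refine Finset.sum_congr rfl fun π _ => ?_
        rw [← Real.exp_add]
        congr 1
        ring
    _ ≤ Real.exp (-(T * Real.log 2)) * ((Fintype.card (S ≃ Fin n) : ℝ)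
          * Real.exp ((∑ π : S ≃ Fin n, (∑ h ∈ Finset.Icc 1 (n - 2), ∑ i ∈ Finset.Icc (h + 1) n, ∑ j ∈ Finset.Icc (i + 1) n, Y h i j π)) / (Fintype.card (S ≃ Fin n) : ℝ))) :=
        mul_le_mul_of_nonneg_left K (Real.exp_pos _).le
    _ = Real.exp ((∑ π : S ≃ Fin n, (∑ h ∈ Finset.Icc 1 (n - 2), ∑ i ∈ Finset.Icc (h + 1) n, ∑ j ∈ Finset.Icc (i + 1) n, Y h i j π)) / (Fintype.card (S ≃ Fin n) : ℝ)
          - T * Real.log 2) * (Fintype.card (S ≃ Fin n) : ℝ) := by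
        rw [Real.exp_sub, Real.exp_neg]
        field_simp
end

section
/- Let δ be a positive integer, let n ≥ 1 be an integer, and let (F_σ)_{σ ∈ I(n)} be events in a probability space such that Pr[F_σ] ≤ Π_{i=1}^{ℓ(σ)} (δ / b_i) for every σ = (b_0, b_1, …, b_ℓ) ∈ I(n). Then Σ_{σ ∈ I(n)} Pr[F_σ] ≤ (n+1)(n+2)⋯(n+δ) / (δ+1)!; in particular, the expected number of indices σ ∈ I(n) whose event F_σ occurs is at most (n+1)(n+2)⋯(n+δ) / (δ+1)!. -/
open MeasureTheory
open scoped ProbabilityTheory BigOperators Classical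

lemma aux1 (m p : ℕ) : m.factorial * ∏ k ∈ Finset.Icc (m+1) (m+p), k = (m+p).factorial := by
  induction p with
  | zero => simp
  | succ p ih =>
    rw [show m + (p+1) = (m+p) + 1 from rfl,
      Finset.prod_Icc_succ_top (by omega : m+1 ≤ m+p+1), ← mul_assoc, ih,
      Nat.factorial_succ]
    ring

lemma aux2 (δ : ℕ) : ∀ n, 1 ≤ n →
    (δ+1).factorial * ∏ b ∈ Finset.Icc 2 n, (b+δ) = (n+δ).factorial := by
  intro n hn
  induction n, hn using Nat.le_induction with
  | base =>
    rw [Finset.Icc_eq_empty (by omega)]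
    simp [Nat.add_comm 1 δ]
  | succ n hn ih =>
    rw [Finset.prod_Icc_succ_top (by omega : 2 ≤ n+1), ← mul_assoc, ih,
      show n+1+δ = (n+δ)+1 from by ring, Nat.factorial_succ]
    ring

/-- let `δ` be a positive integer, `n ≥ 1` an integer, and
`(F σ)_{σ ∈ I(n)}` events in a probability space such that
`Pr[F σ] ≤ ∏_{i=1}^{ℓ(σ)} (δ / b_i)` for every `σ = (b₀,…,b_ℓ) ∈ I(n)`.
A sequence `σ ∈ I(n)` (with `1 = b₀ < b₁ < ⋯ < b_ℓ ≤ n`) is encoded as its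
underlying set `A ⊆ {1,…,n}` with `1 ∈ A`, the product being over `A.erase 1`.
Then `∑_{σ ∈ I(n)} Pr[F σ] ≤ (n+1)(n+2)⋯(n+δ) / (δ+1)!`; in particular, the
expected number of `σ ∈ I(n)` whose event `F σ` occurs is at most
`(n+1)(n+2)⋯(n+δ) / (δ+1)!`. -/
theorem stmt9
    {Ω : Type} [MeasureSpace Ω] [IsProbabilityMeasure (ℙ : Measure Ω)]
    (δ : ℕ) (hδ : 0 < δ) (n : ℕ) (hn : 1 ≤ n)
    (F : Finset ℕ → Set Ω) (hFmeas : ∀ A, MeasurableSet (F A))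
    (hF : ∀ A ∈ (Finset.Icc 1 n).powerset.filter (fun A => 1 ∈ A),
      (ℙ (F A)).toReal ≤ ∏ b ∈ A.erase 1, (δ : ℝ) / (b : ℝ)) :
    (∑ A ∈ (Finset.Icc 1 n).powerset.filter (fun A => 1 ∈ A), (ℙ (F A)).toReal)
        ≤ (∏ k ∈ Finset.Icc (n + 1) (n + δ), (k : ℝ)) / (Nat.factorial (δ + 1))
      ∧ (∫ ω, ((((Finset.Icc 1 n).powerset.filter (fun A => 1 ∈ A)).filter
            (fun A => ω ∈ F A)).card : ℝ))
        ≤ (∏ k ∈ Finset.Icc (n + 1) (n + δ), (k : ℝ)) / (Nat.factorial (δ + 1)) := by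

  set S := (Finset.Icc 1 n).powerset.filter (fun A => 1 ∈ A) with hS
  -- step 1: the sum of the bounds
  have hbij : ∑ A ∈ S, ∏ b ∈ A.erase 1, (δ : ℝ) / (b : ℝ)
      = ∑ B ∈ (Finset.Icc 2 n).powerset, ∏ b ∈ B, (δ : ℝ) / (b : ℝ) := by
    apply Finset.sum_nbij' (fun A => A.erase 1) (fun B => insert 1 B)
    · intro A hA
      simp only [hS, Finset.mem_filter, Finset.mem_powerset] at hA
      simp only [Finset.mem_powerset]
      intro b hb
      simp only [Finset.mem_erase] at hb
      have := hA.1 hb.2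
      simp only [Finset.mem_Icc] at this ⊢
      omega
    · intro B hB
      simp only [Finset.mem_powerset] at hB
      simp only [hS, Finset.mem_filter, Finset.mem_powerset]
      refine ⟨?_, Finset.mem_insert_self 1 B⟩
      intro b hb
      rcases Finset.mem_insert.1 hb with h | h
      · subst h; simp only [Finset.mem_Icc]; omega
      · have := hB h; simp only [Finset.mem_Icc] at this ⊢; omega
    · intro A hA
      simp only [hS, Finset.mem_filter] at hA
      exact Finset.insert_erase hA.2
    · intro B hB
      simp only [Finset.mem_powerset] at hB
      apply Finset.erase_insert
      intro h
      have := hB h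
      simp only [Finset.mem_Icc] at this
      omega
    · intro A hA; rfl
  have hprodadd : ∑ B ∈ (Finset.Icc 2 n).powerset, ∏ b ∈ B, (δ : ℝ) / (b : ℝ)
      = ∏ b ∈ Finset.Icc 2 n, ((δ : ℝ) / (b : ℝ) + 1) := by
    rw [Finset.prod_add]
    simp
  have hfac2n : ∏ b ∈ Finset.Icc 2 n, (b : ℕ) = n.factorial := by
    have := aux1 1 (n - 1)
    rw [show 1 + (n-1) = n from by omega] at this
    simpa using this
  have hkey : ∏ b ∈ Finset.Icc 2 n, ((δ : ℝ) / (b : ℝ) + 1)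
      = (∏ k ∈ Finset.Icc (n + 1) (n + δ), (k : ℝ)) / (Nat.factorial (δ + 1)) := by
    have h1 : ∏ b ∈ Finset.Icc 2 n, ((δ : ℝ) / (b : ℝ) + 1)
        = (∏ b ∈ Finset.Icc 2 n, ((b + δ : ℕ) : ℝ)) / (∏ b ∈ Finset.Icc 2 n, (b : ℝ)) := by
      rw [← Finset.prod_div_distrib]
      apply Finset.prod_congr rfl
      intro b hb
      simp only [Finset.mem_Icc] at hb
      have hb0 : (b:ℝ) ≠ 0 := by
        have : 0 < b := by omega
        exact_mod_cast this.ne'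
      push_cast
      field_simp
      ring
    rw [h1]
    have h2 : ∏ b ∈ Finset.Icc 2 n, ((b + δ : ℕ) : ℝ)
        = ((∏ b ∈ Finset.Icc 2 n, (b + δ) : ℕ) : ℝ) := by push_cast; ring
    have h3 : ∏ b ∈ Finset.Icc 2 n, (b : ℝ) = ((n.factorial : ℕ) : ℝ) := by
      rw [← hfac2n]; push_cast; ring
    have h4 : ∏ k ∈ Finset.Icc (n + 1) (n + δ), (k : ℝ)
        = ((∏ k ∈ Finset.Icc (n + 1) (n + δ), k : ℕ) : ℝ) := by push_cast; ring
    rw [h2, h3, h4]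
    have hA := aux2 δ n hn
    have hB := aux1 n δ
    have hAr : ((δ+1).factorial : ℝ) * ((∏ b ∈ Finset.Icc 2 n, (b + δ) : ℕ) : ℝ)
        = ((n+δ).factorial : ℝ) := by exact_mod_cast congrArg Nat.cast hA
    have hBr : (n.factorial : ℝ) * ((∏ k ∈ Finset.Icc (n + 1) (n + δ), k : ℕ) : ℝ)
        = ((n+δ).factorial : ℝ) := by exact_mod_cast congrArg Nat.cast hB
    have hf1 : (n.factorial : ℝ) ≠ 0 := by positivity
    have hf2 : ((δ+1).factorial : ℝ) ≠ 0 := by positivity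
    rw [div_eq_div_iff hf1 hf2]
    linear_combination hAr - hBr
  have hsum : ∑ A ∈ S, ∏ b ∈ A.erase 1, (δ : ℝ) / (b : ℝ)
      = (∏ k ∈ Finset.Icc (n + 1) (n + δ), (k : ℝ)) / (Nat.factorial (δ + 1)) := by
    rw [hbij, hprodadd, hkey]
  have hmain : ∑ A ∈ S, (ℙ (F A)).toReal
      ≤ (∏ k ∈ Finset.Icc (n + 1) (n + δ), (k : ℝ)) / (Nat.factorial (δ + 1)) := by
    rw [← hsum]
    exact Finset.sum_le_sum hF
  refine ⟨hmain, ?_⟩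
  have hint : (∫ ω, (((S.filter (fun A => ω ∈ F A)).card : ℝ)))
      = ∑ A ∈ S, (ℙ (F A)).toReal := by
    have hfun : ∀ ω, ((S.filter (fun A => ω ∈ F A)).card : ℝ)
        = ∑ A ∈ S, Set.indicator (F A) (fun _ => (1:ℝ)) ω := by
      intro ω
      rw [Finset.card_filter]
      push_cast
      apply Finset.sum_congr rfl
      intro A _
      simp [Set.indicator_apply]
    simp_rw [hfun]
    rw [MeasureTheory.integral_finset_sum]
    · apply Finset.sum_congr rfl
      intro A _
      rw [MeasureTheory.integral_indicator_const (1:ℝ) (hFmeas A)]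
      simp [Measure.real]
    · intro A _
      exact (integrable_const (1:ℝ)).indicator (hFmeas A)
  rw [hint]
  exact hmain
end

section
/- Let δ ≥ 1 be a real number, let n ≥ 2 be an integer, and let Z_2, Z_3, …, Z_n be mutually independent {0,1}-valued random variables with E[Z_j] ≤ δ/j for every j ∈ {2,…,n}. Then for every real β > 0: Pr[Σ_{j=2}^n Z_j ≥ β·ln n] ≤ exp(δ·(H_n − 1) − β·(ln n)·(ln 2)) ≤ n^{δ − β·ln 2}. -/
open MeasureTheory
open scoped ProbabilityTheory BigOperators

/-- let `δ ≥ 1` be real, `n ≥ 2` an integer, and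
`Z 2, Z 3, …, Z n` mutually independent `{0,1}`-valued random variables with
`E[Z j] ≤ δ/j` for every `j ∈ {2,…,n}`. Then for every real `β > 0`:
`Pr[∑_{j=2}^n Z j ≥ β·ln n] ≤ exp (δ·(H_n − 1) − β·(ln n)·(ln 2))
≤ n^(δ − β·ln 2)`, where `H_n = ∑_{k=1}^n 1/k`. -/
theorem stmt12
    {Ω : Type} [MeasureSpace Ω] [IsProbabilityMeasure (ℙ : Measure Ω)]
    (δ : ℝ) (hδ : 1 ≤ δ) (n : ℕ) (hn : 2 ≤ n)
    (Z : ℕ → Ω → ℝ)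
    (hmeas : ∀ j, Measurable (Z j))
    (h01 : ∀ j ω, Z j ω = 0 ∨ Z j ω = 1)
    (hindep : ProbabilityTheory.iIndepFun
      (fun j : (Finset.Icc 2 n : Finset ℕ) => Z j) ℙ)
    (hE : ∀ j, 2 ≤ j → j ≤ n → (∫ ω, Z j ω) ≤ δ / (j : ℝ)) :
    ∀ β : ℝ, 0 < β →
      (ℙ {ω | β * Real.log n ≤ ∑ j ∈ Finset.Icc 2 n, Z j ω}).toReal
          ≤ Real.exp (δ * ((∑ k ∈ Finset.Icc 1 n, (1 : ℝ) / k) - 1)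
              - β * Real.log n * Real.log 2)
        ∧ Real.exp (δ * ((∑ k ∈ Finset.Icc 1 n, (1 : ℝ) / k) - 1)
              - β * Real.log n * Real.log 2)
          ≤ (n : ℝ) ^ (δ - β * Real.log 2) := by
  intro β hβ
  have hn0 : (0 : ℝ) < n := by positivity
  have ht : (0 : ℝ) ≤ Real.log 2 := Real.log_nonneg one_le_two
  -- harmonic sum identity
  have hH : (∑ k ∈ Finset.Icc 1 n, (1 : ℝ) / k) - 1
      = ∑ j ∈ Finset.Icc 2 n, (1 : ℝ) / j := by
    have hins : Finset.Icc 1 n = insert 1 (Finset.Icc 2 n) := by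
      ext k; simp only [Finset.mem_Icc, Finset.mem_insert]; omega
    rw [hins, Finset.sum_insert (by simp)]
    simp
  -- integrability of each Z j
  have hZint : ∀ j, Integrable (Z j) ℙ := by
    intro j
    refine Integrable.mono' (integrable_const 1) (hmeas j).aestronglyMeasurable
      (ae_of_all _ fun ω => ?_)
    rcases h01 j ω with h | h <;> simp [h]
  -- pointwise exp formula
  have hexpZ : ∀ j ω, Real.exp (Real.log 2 * Z j ω) = 1 + Z j ω := by
    intro j ω
    rcases h01 j ω with h | h <;>
      simp [h, Real.exp_log, (by norm_num : (0:ℝ) < 2)] <;> norm_num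
  -- measurability of the sum
  have hS_meas : Measurable (fun ω => ∑ j ∈ Finset.Icc 2 n, Z j ω) :=
    Finset.measurable_sum _ fun j _ => hmeas j
  -- integrability of exp of the sum
  have h_int : Integrable
      (fun ω => Real.exp (Real.log 2 * (∑ j ∈ Finset.Icc 2 n, Z j) ω)) ℙ := by
    have hfun : (fun ω => Real.exp (Real.log 2 * (∑ j ∈ Finset.Icc 2 n, Z j) ω))
        = fun ω => Real.exp (Real.log 2 * ∑ j ∈ Finset.Icc 2 n, Z j ω) := by
      funext ω; simp [Finset.sum_apply]
    rw [hfun]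
    refine Integrable.mono' (integrable_const (Real.exp (Real.log 2 * n)))
      (Real.measurable_exp.comp (hS_meas.const_mul _)).aestronglyMeasurable
      (ae_of_all _ fun ω => ?_)
    rw [Real.norm_eq_abs, Real.abs_exp, Real.exp_le_exp]
    refine mul_le_mul_of_nonneg_left ?_ ht
    calc ∑ j ∈ Finset.Icc 2 n, Z j ω
          ≤ ∑ j ∈ Finset.Icc 2 n, (1 : ℝ) :=
            Finset.sum_le_sum fun j _ => by rcases h01 j ω with h | h <;> simp [h]
        _ = ((Finset.Icc 2 n).card : ℝ) := by simp
        _ ≤ (n : ℝ) := by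
            have : (Finset.Icc 2 n).card ≤ n := by
              rw [Nat.card_Icc]; omega
            exact_mod_cast this
  -- Chernoff bound
  have hcher := ProbabilityTheory.measure_ge_le_exp_mul_mgf (μ := ℙ)
    (X := ∑ j ∈ Finset.Icc 2 n, Z j) (β * Real.log n) ht h_int
  simp only [Finset.sum_apply] at hcher
  -- mgf of the sum is the product of mgfs
  have hmgf_sum : ProbabilityTheory.mgf (∑ j ∈ Finset.Icc 2 n, Z j) ℙ (Real.log 2)
      = ∏ j ∈ Finset.Icc 2 n, ProbabilityTheory.mgf (Z j) ℙ (Real.log 2) := by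
    rw [← Finset.sum_coe_sort (Finset.Icc 2 n) Z,
      ← Finset.prod_coe_sort (Finset.Icc 2 n)
        (fun j => ProbabilityTheory.mgf (Z j) ℙ (Real.log 2))]
    exact hindep.mgf_sum (fun i => hmeas i) Finset.univ
  -- bound on individual mgfs
  have hmgf_le : ∀ j ∈ Finset.Icc 2 n,
      ProbabilityTheory.mgf (Z j) ℙ (Real.log 2) ≤ Real.exp (δ / j) := by
    intro j hj
    rw [Finset.mem_Icc] at hj
    have hval : ProbabilityTheory.mgf (Z j) ℙ (Real.log 2) = 1 + ∫ ω, Z j ω := by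
      rw [ProbabilityTheory.mgf]
      rw [show (fun ω => Real.exp (Real.log 2 * Z j ω)) = fun ω => 1 + Z j ω from
        funext (hexpZ j)]
      rw [integral_add (integrable_const 1) (hZint j)]
      simp
    rw [hval]
    calc 1 + ∫ ω, Z j ω ≤ 1 + δ / j := by linarith [hE j hj.1 hj.2]
      _ ≤ Real.exp (δ / j) := by linarith [Real.add_one_le_exp (δ / j)]
  -- bound on the product
  have hprod : ∏ j ∈ Finset.Icc 2 n, ProbabilityTheory.mgf (Z j) ℙ (Real.log 2)
      ≤ Real.exp (δ * ∑ j ∈ Finset.Icc 2 n, (1 : ℝ) / j) := by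
    calc ∏ j ∈ Finset.Icc 2 n, ProbabilityTheory.mgf (Z j) ℙ (Real.log 2)
        ≤ ∏ j ∈ Finset.Icc 2 n, Real.exp (δ / j) :=
          Finset.prod_le_prod (fun j _ => ProbabilityTheory.mgf_nonneg) hmgf_le
      _ = Real.exp (∑ j ∈ Finset.Icc 2 n, δ / j) := (Real.exp_sum _ _).symm
      _ = Real.exp (δ * ∑ j ∈ Finset.Icc 2 n, (1 : ℝ) / j) := by
          rw [Finset.mul_sum]; simp_rw [mul_one_div]
  constructor
  · calc (ℙ {ω | β * Real.log n ≤ ∑ j ∈ Finset.Icc 2 n, Z j ω}).toReal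
        ≤ Real.exp (-(Real.log 2) * (β * Real.log n)) *
            ProbabilityTheory.mgf (∑ j ∈ Finset.Icc 2 n, Z j) ℙ (Real.log 2) := hcher
      _ ≤ Real.exp (-(Real.log 2) * (β * Real.log n)) *
            Real.exp (δ * ∑ j ∈ Finset.Icc 2 n, (1 : ℝ) / j) := by
          rw [hmgf_sum]
          exact mul_le_mul_of_nonneg_left hprod (Real.exp_pos _).le
      _ = Real.exp (δ * ((∑ k ∈ Finset.Icc 1 n, (1 : ℝ) / k) - 1)
            - β * Real.log n * Real.log 2) := by
          rw [← Real.exp_add, hH]; congr 1; ring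
  · rw [Real.rpow_def_of_pos hn0]
    rw [Real.exp_le_exp]
    have hharm : (∑ k ∈ Finset.Icc 1 n, (1 : ℝ) / k) ≤ 1 + Real.log n := by
      have h1 : (∑ k ∈ Finset.Icc 1 n, (1 : ℝ) / k) = (harmonic n : ℝ) := by
        rw [harmonic_eq_sum_Icc]
        push_cast
        simp [one_div]
      rw [h1]
      exact harmonic_le_one_add_log n
    have h2 : δ * ((∑ k ∈ Finset.Icc 1 n, (1 : ℝ) / k) - 1) ≤ δ * Real.log n :=
      mul_le_mul_of_nonneg_left (by linarith) (by linarith)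
    nlinarith [h2]
end

section
/- Let δ ≥ 1 be a real number and let n ≥ 2 be an integer. Let X_{i,j} (1 ≤ i < j ≤ n) be {0,1}-valued random variables on a probability space such that (i) E[X_{i,j}] ≤ δ/j for all 1 ≤ i < j ≤ n, and (ii) for every σ ∈ I(n), the family {X_{i,j} : (i,j) ∈ X(σ)} is mutually independent. For σ = (b_0, b_1, …, b_ℓ) ∈ I(n), let F_σ denote the event that X_{b_{i−1}, b_i} = 1 for every i ∈ {1,…,ℓ} (σ is then called feasible). Then there exist constants β_0 ≥ 1 and κ > 0, depending only on δ, such that for every real β ≥ β_0: Pr[there exists σ ∈ I(n) such that F_σ occurs and Σ_{(i,j) ∈ X(σ)} X_{i,j} ≥ β·ln n] ≤ n^{−κ·β}. -/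
open MeasureTheory
open scoped ProbabilityTheory BigOperators

/-- For a sequence `σ ∈ I(n)` given by `1 = b 0 < b 1 < ⋯ < b ℓ ≤ n`, the set
`X(σ)` of the `n − 1` index pairs
`{(b (i−1), j) : 1 ≤ i ≤ ℓ, b (i−1) < j ≤ b i} ∪ {(b ℓ, j) : b ℓ < j ≤ n}`. -/
def pathEvents (n ℓ : ℕ) (b : ℕ → ℕ) : Finset (ℕ × ℕ) :=
  ((Finset.range ℓ).biUnion fun i =>
      (Finset.Ioc (b i) (b (i + 1))).image fun j => (b i, j)) ∪
    ((Finset.Ioc (b ℓ) n).image fun j => (b ℓ, j))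

/-- `σ ∈ I(n)`: the sequence `b 0, b 1, …, b ℓ` is strictly increasing with
`b 0 = 1` and `b ℓ ≤ n`. -/
def isIndexSeq (n ℓ : ℕ) (b : ℕ → ℕ) : Prop :=
  b 0 = 1 ∧ (∀ i, i < ℓ → b i < b (i + 1)) ∧ b ℓ ≤ n

-- helper 1
lemma integrable01 {Ω : Type} [MeasureSpace Ω] [IsProbabilityMeasure (ℙ : Measure Ω)]
    {f : Ω → ℝ} (hm : Measurable f) (h01 : ∀ ω, f ω = 0 ∨ f ω = 1) :
    Integrable f := by
  refine (integrable_const (1:ℝ)).mono' hm.aestronglyMeasurable (ae_of_all _ fun ω => ?_)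
  rcases h01 ω with h | h <;> simp [h]

-- helper 2
lemma indep_prod_integral {Ω : Type} [MeasureSpace Ω] [IsProbabilityMeasure (ℙ : Measure Ω)]
    {ι : Type*} (f : ι → Ω → ℝ)
    (hindep : ProbabilityTheory.iIndepFun f ℙ)
    (hmeas : ∀ i, Measurable (f i)) (hint : ∀ i, Integrable (f i) ℙ) (s : Finset ι) :
    Integrable (fun ω => ∏ i ∈ s, f i ω) ℙ ∧
      (∫ ω, ∏ i ∈ s, f i ω) = ∏ i ∈ s, ∫ ω, f i ω := by
  classical
  induction s using Finset.cons_induction with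
  | empty => simp
  | cons i s hi ih =>
    have hIndep : ProbabilityTheory.IndepFun (∏ j ∈ s, f j) (f i) ℙ :=
      ProbabilityTheory.iIndepFun.indepFun_finset_prod_of_notMem hindep hmeas hi
    have hfun : (∏ j ∈ s, f j) = (fun ω => ∏ j ∈ s, f j ω) := by
      funext ω; simp
    have hprodint : Integrable (∏ j ∈ s, f j) ℙ := by
      rw [hfun]; exact ih.1
    have hint2 : Integrable ((∏ j ∈ s, f j) * f i) ℙ :=
      hIndep.integrable_mul hprodint (hint i)
    have hmul : (∫ ω, ((∏ j ∈ s, f j) * f i) ω) =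
        (∫ ω, (∏ j ∈ s, f j) ω) * ∫ ω, f i ω :=
      hIndep.integral_mul_eq_mul_integral hprodint.aestronglyMeasurable (hint i).aestronglyMeasurable
    constructor
    · have : (fun ω => ∏ j ∈ Finset.cons i s hi, f j ω)
          = (∏ j ∈ s, f j) * f i := by
        funext ω
        simp [Finset.prod_cons, Finset.prod_insert hi, mul_comm]
      rw [this]; exact hint2
    · rw [Finset.prod_cons, ← ih.2]
      have : (fun ω => ∏ j ∈ Finset.cons i s hi, f j ω)
          = (fun ω => ((∏ j ∈ s, f j) * f i) ω) := by
        funext ω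
        simp [Finset.prod_cons, Finset.prod_insert hi, mul_comm]
      rw [show (∫ ω, ∏ j ∈ Finset.cons i s hi, f j ω) = ∫ ω, ((∏ j ∈ s, f j) * f i) ω from by rw [this]]
      rw [hmul, hfun]
      ring

-- helper 3
lemma pathEvents_congr {n ℓ : ℕ} {b b' : ℕ → ℕ} (h : ∀ i, i ≤ ℓ → b i = b' i) :
    pathEvents n ℓ b = pathEvents n ℓ b' := by
  unfold pathEvents
  congr 1
  · refine Finset.biUnion_congr rfl fun i hi => ?_
    rw [Finset.mem_range] at hi
    rw [h i hi.le, h (i+1) hi]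
  · rw [h ℓ le_rfl]

-- helper 4
lemma bmono {ℓ : ℕ} {b : ℕ → ℕ} (hmono : ∀ i, i < ℓ → b i < b (i + 1)) :
    ∀ i k, i ≤ k → k ≤ ℓ → b i ≤ b k := by
  intro i k hik hkl
  induction k with
  | zero => simp_all
  | succ k ih =>
    rcases Nat.lt_or_ge i (k+1) with h | h
    · have h1 : b i ≤ b k := ih (Nat.lt_succ_iff.mp h) (le_trans (Nat.le_succ k) hkl)
      exact le_trans h1 (hmono k (Nat.lt_of_succ_le hkl)).le
    · have : i = k + 1 := le_antisymm hik h
      rw [this]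

-- helper 5: structure lemma
lemma pathEvents_structure : ∀ (ℓ n : ℕ) (b : ℕ → ℕ), isIndexSeq n ℓ b →
    ∃ a : ℕ → ℕ,
      pathEvents n ℓ b = (Finset.Ioc 1 n).image (fun j => (a j, j)) ∧
      (∀ j, 1 < j → j ≤ n → 1 ≤ a j ∧ a j < j) ∧
      (∀ i, 1 ≤ i → i ≤ ℓ → a (b i) = b (i - 1)) ∧
      (∀ j, b ℓ < j → j ≤ n → a j = b ℓ) := by
  intro ℓ
  induction ℓ with
  | zero =>
    intro n b hb
    obtain ⟨h0, _, hn⟩ := hb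
    refine ⟨fun _ => 1, ?_, ?_, ?_, ?_⟩
    · unfold pathEvents
      simp [h0]
    · intro j hj _; exact ⟨le_refl 1, hj⟩
    · intro i hi hi0; omega
    · intro j hj _; rw [h0]
  | succ ℓ IH =>
    intro n b hb
    obtain ⟨h0, hmono, hn⟩ := hb
    have hbl : b ℓ < b (ℓ+1) := hmono ℓ (Nat.lt_succ_self ℓ)
    have hb' : isIndexSeq (b (ℓ+1)) ℓ b :=
      ⟨h0, fun i hi => hmono i (Nat.lt_succ_of_lt hi), hbl.le⟩
    obtain ⟨a, ha1, ha2, ha3, ha4⟩ := IH (b (ℓ+1)) b hb'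
    have hmle : ∀ i k, i ≤ k → k ≤ ℓ + 1 → b i ≤ b k := bmono hmono
    have h1le : 1 ≤ b (ℓ+1) := by
      have := hmle 0 (ℓ+1) (Nat.zero_le _) le_rfl; omega
    refine ⟨fun j => if j ≤ b (ℓ+1) then a j else b (ℓ+1), ?_, ?_, ?_, ?_⟩
    · have hsplit : pathEvents n (ℓ+1) b =
          pathEvents (b (ℓ+1)) ℓ b ∪ (Finset.Ioc (b (ℓ+1)) n).image (fun j => (b (ℓ+1), j)) := by
        unfold pathEvents
        rw [Finset.range_add_one, Finset.biUnion_insert, Finset.union_comm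
          ((Finset.Ioc (b ℓ) (b (ℓ+1))).image fun j => (b ℓ, j)), Finset.union_assoc]
      rw [hsplit, ha1, ← Finset.Ioc_union_Ioc_eq_Ioc h1le hn, Finset.image_union]
      congr 1
      · refine Finset.image_congr fun j hj => ?_
        simp only [Finset.mem_coe, Finset.mem_Ioc] at hj
        simp [hj.2]
      · refine Finset.image_congr fun j hj => ?_
        simp only [Finset.mem_coe, Finset.mem_Ioc] at hj
        simp [Nat.not_le.mpr hj.1]
    · intro j hj hjn
      by_cases h : j ≤ b (ℓ+1)
      · simpa [h] using ha2 j hj h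
      · simp only [if_neg h]
        exact ⟨h1le, Nat.lt_of_not_le h⟩
    · intro i hi hil
      rcases Nat.lt_or_ge i (ℓ+1) with h | h
      · have hle : b i ≤ b (ℓ+1) := hmle i (ℓ+1) (Nat.le_of_lt h) le_rfl
        simp only [if_pos hle]
        exact ha3 i hi (Nat.lt_succ_iff.mp h)
      · have : i = ℓ + 1 := le_antisymm hil h
        subst this
        simp only [if_pos le_rfl, ha4 (b (ℓ+1)) hbl le_rfl]
        simp
    · intro j hj hjn
      simp only [if_neg (Nat.not_le.mpr hj)]

-- the canonical sequence associated with a finite set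
def seqOf (T : Finset ℕ) : ℕ → ℕ := fun i => (1 :: T.sort (· ≤ ·)).getD i 1

lemma sort_image_range : ∀ (ℓ : ℕ) (b : ℕ → ℕ), (∀ i k, i < k → k ≤ ℓ → b i < b k) →
    ((Finset.range (ℓ+1)).image b).sort (· ≤ ·) = (List.range (ℓ+1)).map b := by
  intro ℓ
  induction ℓ with
  | zero =>
    intro b _
    simp [Finset.range_one, List.range_succ]
  | succ ℓ IH =>
    intro b hstrict
    have hsplit : (Finset.range (ℓ+2)).image b
        = insert (b 0) ((Finset.range (ℓ+1)).image (fun i => b (i+1))) := by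
      ext j
      simp only [Finset.mem_image, Finset.mem_range, Finset.mem_insert]
      constructor
      · rintro ⟨i, hi, rfl⟩
        rcases i with _ | i
        · exact Or.inl rfl
        · exact Or.inr ⟨i, by omega, rfl⟩
      · rintro (rfl | ⟨i, hi, rfl⟩)
        · exact ⟨0, by omega, rfl⟩
        · exact ⟨i+1, by omega, rfl⟩
    have hIH := IH (fun i => b (i+1)) (fun i k hik hk => hstrict (i+1) (k+1) (by omega) (by omega))
    have hnotmem : b 0 ∉ (Finset.range (ℓ+1)).image (fun i => b (i+1)) := by
      intro hmem
      obtain ⟨i, hi, hbi⟩ := Finset.mem_image.mp hmem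
      have := hstrict 0 (i+1) (by omega) (by have := Finset.mem_range.mp hi; omega)
      omega
    have hle : ∀ x ∈ (Finset.range (ℓ+1)).image (fun i => b (i+1)), b 0 ≤ x := by
      intro x hmem
      obtain ⟨i, hi, rfl⟩ := Finset.mem_image.mp hmem
      exact (hstrict 0 (i+1) (by omega) (by have := Finset.mem_range.mp hi; omega)).le
    rw [hsplit, Finset.sort_insert _ hle hnotmem, hIH]
    rw [List.range_succ_eq_map (n := ℓ+1), List.map_cons, List.map_map]
    rfl

lemma seqOf_spec {n ℓ : ℕ} {b : ℕ → ℕ} (hb : isIndexSeq n ℓ b) :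
    ((Finset.Icc 1 ℓ).image b).card = ℓ ∧
    (∀ i, i ≤ ℓ → seqOf ((Finset.Icc 1 ℓ).image b) i = b i) ∧
    (Finset.Icc 1 ℓ).image b ⊆ Finset.Ioc 1 n := by
  obtain ⟨h0, hmono, hn⟩ := hb
  have hmle : ∀ i k, i ≤ k → k ≤ ℓ → b i ≤ b k := bmono hmono
  have hstrict : ∀ i k, i < k → k ≤ ℓ → b i < b k := by
    intro i k hik hk
    calc b i < b (i+1) := hmono i (by omega)
    _ ≤ b k := hmle (i+1) k (by omega) hk
  set T := (Finset.Icc 1 ℓ).image b with hT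
  have hS : (Finset.range (ℓ+1)).image b = insert 1 T := by
    rw [hT]
    ext j
    simp only [Finset.mem_image, Finset.mem_range, Finset.mem_insert, Finset.mem_Icc]
    constructor
    · rintro ⟨i, hi, rfl⟩
      rcases Nat.eq_zero_or_pos i with rfl | hpos
      · exact Or.inl h0
      · exact Or.inr ⟨i, ⟨hpos, by omega⟩, rfl⟩
    · rintro (rfl | ⟨i, ⟨h1, h2⟩, rfl⟩)
      · exact ⟨0, by omega, h0⟩
      · exact ⟨i, by omega, rfl⟩
  have h1T : (1:ℕ) ∉ T := by
    rw [hT]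
    intro hmem
    obtain ⟨i, hi, hbi⟩ := Finset.mem_image.mp hmem
    rw [Finset.mem_Icc] at hi
    have := hstrict 0 i hi.1 hi.2
    omega
  have h1le : ∀ x ∈ T, (1:ℕ) ≤ x := by
    intro x hx
    rw [hT] at hx
    obtain ⟨i, hi, rfl⟩ := Finset.mem_image.mp hx
    rw [Finset.mem_Icc] at hi
    have := hstrict 0 i hi.1 hi.2
    omega
  have hlist : (1 : ℕ) :: T.sort (· ≤ ·) = (List.range (ℓ+1)).map b := by
    rw [← Finset.sort_insert (· ≤ ·) h1le h1T, ← hS]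
    exact sort_image_range ℓ b hstrict
  have hlen : (T.sort (· ≤ ·)).length = ℓ := by
    have := congrArg List.length hlist
    simpa using this
  refine ⟨by rw [← Finset.length_sort (· ≤ ·), hlen], ?_, ?_⟩
  · intro i hi
    unfold seqOf
    rw [hlist]
    have hilt : i < ((List.range (ℓ+1)).map b).length := by simpa using by omega
    rw [List.getD_eq_getElem _ _ hilt]
    simp
  · intro x hx
    rw [hT] at hx
    obtain ⟨i, hi, rfl⟩ := Finset.mem_image.mp hx
    rw [Finset.mem_Icc] at hi
    rw [Finset.mem_Ioc]
    constructor
    · have := hstrict 0 i hi.1 hi.2; omega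
    · exact le_trans (hmle i ℓ hi.2 le_rfl) hn

lemma harmonic_le_log : ∀ n : ℕ, 1 ≤ n → ∑ j ∈ Finset.Ioc 1 n, (1 / (j:ℝ)) ≤ Real.log n := by
  intro n
  induction n with
  | zero => omega
  | succ n IH =>
    intro _
    rcases Nat.eq_zero_or_pos n with rfl | hn
    · simp
    · have hstep : ∑ j ∈ Finset.Ioc 1 (n+1), (1 / (j:ℝ))
          = (∑ j ∈ Finset.Ioc 1 n, (1 / (j:ℝ))) + 1 / ((n:ℝ)+1) := by
        rw [Finset.sum_Ioc_succ_top hn]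
        push_cast
        ring
      have hlog : 1 / ((n:ℝ)+1) ≤ Real.log (n+1) - Real.log n := by
        have hx : (0:ℝ) < ((n:ℝ)+1) / n := by positivity
        have h := Real.one_sub_inv_le_log_of_pos hx
        have hinv : (((n:ℝ)+1) / n)⁻¹ = (n:ℝ) / (n+1) := by
          rw [inv_div]
        have heq : 1 - ((n:ℝ)) / (n+1) = 1 / ((n:ℝ)+1) := by
          field_simp
          ring
        have hlogdiv : Real.log (((n:ℝ)+1) / n) = Real.log (n+1) - Real.log n := by
          rw [Real.log_div (by positivity) (by positivity)]
        rw [hinv, heq, hlogdiv] at h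
        exact h
      have := IH hn
      push_cast
      push_cast at hstep this hlog
      linarith
    
lemma prod_one_add_le {n : ℕ} (hn : 1 ≤ n) (c : ℝ) (hc : 0 ≤ c) :
    ∏ j ∈ Finset.Ioc 1 n, (1 + c / (j:ℝ)) ≤ Real.exp (c * Real.log n) := by
  have h1 : ∏ j ∈ Finset.Ioc 1 n, (1 + c / (j:ℝ))
      ≤ ∏ j ∈ Finset.Ioc 1 n, Real.exp (c / (j:ℝ)) := by
    refine Finset.prod_le_prod (fun j hj => ?_) (fun j hj => ?_)
    · have hj2 := (Finset.mem_Ioc.mp hj).1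
      have hj0 : (0:ℝ) < (j:ℝ) := by
        have : 0 < j := by omega
        exact_mod_cast this
      positivity
    · have := Real.add_one_le_exp (c / (j:ℝ))
      linarith
  rw [← Real.exp_sum] at h1
  refine h1.trans (Real.exp_le_exp.mpr ?_)
  have heq : ∑ j ∈ Finset.Ioc 1 n, c / (j:ℝ) = c * ∑ j ∈ Finset.Ioc 1 n, 1 / (j:ℝ) := by
    rw [Finset.mul_sum]
    exact Finset.sum_congr rfl fun j _ => by ring
  rw [heq]
  exact mul_le_mul_of_nonneg_left (harmonic_le_log n hn) hc

lemma chernoff {Ω : Type} [MeasureSpace Ω] [IsProbabilityMeasure (ℙ : Measure Ω)]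
    (δ : ℝ) (hδ : 1 ≤ δ) (n ℓ : ℕ) (hn : 2 ≤ n) (b : ℕ → ℕ) (hb : isIndexSeq n ℓ b)
    (X : ℕ → ℕ → Ω → ℝ) (hXm : ∀ i j, Measurable (X i j))
    (hX01 : ∀ i j ω, 1 ≤ i → i < j → j ≤ n → X i j ω = 0 ∨ X i j ω = 1)
    (hXmean : ∀ i j, 1 ≤ i → i < j → j ≤ n → (∫ ω, X i j ω) ≤ δ / (j : ℝ))
    (hindep : ProbabilityTheory.iIndepFun
      (fun p : (pathEvents n ℓ b : Finset (ℕ × ℕ)) => X p.1.1 p.1.2) ℙ)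
    (t : ℝ) :
    (ℙ {ω | (∀ i, 1 ≤ i → i ≤ ℓ → X (b (i - 1)) (b i) ω = 1) ∧
        t ≤ ∑ p ∈ pathEvents n ℓ b, X p.1 p.2 ω}).toReal
      ≤ Real.exp (-t) * (∏ i ∈ (Finset.Icc 1 ℓ).image b, (Real.exp 1 * (δ / (i:ℝ))))
        * ∏ j ∈ Finset.Ioc 1 n, (1 + (Real.exp 1 - 1) * (δ / (j:ℝ))) := by
  classical
  obtain ⟨a, hP, hab, hafeas, _⟩ := pathEvents_structure ℓ n b hb
  obtain ⟨hcard, hagree, hTsub⟩ := seqOf_spec hb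
  set T := (Finset.Icc 1 ℓ).image b with hTdef
  set P := pathEvents n ℓ b with hPdef
  set e1 := Real.exp 1 with he1
  have he1pos : 0 < e1 := Real.exp_pos 1
  have he1ge1 : 1 ≤ e1 := by
    rw [he1]
    have := Real.add_one_le_exp (1:ℝ)
    linarith
  set Y : ℕ × ℕ → Ω → ℝ :=
    fun p ω => if p.2 ∈ T then e1 * X p.1 p.2 ω else 1 + (e1 - 1) * X p.1 p.2 ω with hY
  -- index bounds for pairs in P
  have hval : ∀ p ∈ P, 1 ≤ p.1 ∧ p.1 < p.2 ∧ p.2 ≤ n := by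
    intro p hp
    rw [hP] at hp
    obtain ⟨j, hj, rfl⟩ := Finset.mem_image.mp hp
    rw [Finset.mem_Ioc] at hj
    obtain ⟨h1, h2⟩ := hab j hj.1 hj.2
    exact ⟨h1, h2, hj.2⟩
  have hX01' : ∀ p ∈ P, ∀ ω, X p.1 p.2 ω = 0 ∨ X p.1 p.2 ω = 1 := by
    intro p hp ω
    obtain ⟨h1, h2, h3⟩ := hval p hp
    exact hX01 p.1 p.2 ω h1 h2 h3
  have hYm : ∀ p : ℕ × ℕ, Measurable (Y p) := by
    intro p
    rw [hY]
    by_cases h : p.2 ∈ T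
    · simp only [if_pos h]
      exact (hXm p.1 p.2).const_mul e1
    · simp only [if_neg h]
      exact measurable_const.add ((hXm p.1 p.2).const_mul _)
  have hY0 : ∀ p ∈ P, ∀ ω, 0 ≤ Y p ω := by
    intro p hp ω
    rw [hY]
    rcases hX01' p hp ω with h | h <;>
      by_cases hm : p.2 ∈ T <;> simp [h, hm] <;> linarith
  have hYle : ∀ p ∈ P, ∀ ω, Y p ω ≤ e1 := by
    intro p hp ω
    rw [hY]
    rcases hX01' p hp ω with h | h <;>
      by_cases hm : p.2 ∈ T <;> simp [h, hm] <;> linarith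
  have hYint : ∀ p ∈ P, Integrable (Y p) ℙ := by
    intro p hp
    refine (integrable_const e1).mono' (hYm p).aestronglyMeasurable (ae_of_all _ fun ω => ?_)
    rw [Real.norm_eq_abs, abs_le]
    constructor
    · linarith [hY0 p hp ω]
    · exact hYle p hp ω
  -- independence of the transformed family
  have hindY : ProbabilityTheory.iIndepFun
      (fun p : (P : Finset (ℕ × ℕ)) => Y (p : ℕ × ℕ)) ℙ := by
    have hg : ∀ p : (P : Finset (ℕ × ℕ)), Measurable
        (fun x : ℝ => if (p : ℕ × ℕ).2 ∈ T then e1 * x else 1 + (e1 - 1) * x) := by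
      intro p
      by_cases h : (p : ℕ × ℕ).2 ∈ T
      · simp only [if_pos h]; fun_prop
      · simp only [if_neg h]; fun_prop
    have := ProbabilityTheory.iIndepFun.comp hindep
      (fun p : (P : Finset (ℕ × ℕ)) =>
        fun x : ℝ => if (p : ℕ × ℕ).2 ∈ T then e1 * x else 1 + (e1 - 1) * x) hg
    exact this
  have hprod := indep_prod_integral (fun p : (P : Finset (ℕ × ℕ)) => Y (p : ℕ × ℕ)) hindY
    (fun p => hYm _) (fun p => hYint _ p.2) Finset.univ
  have hconv : ∀ ω : Ω, (∏ p : (P : Finset (ℕ × ℕ)), Y (p : ℕ × ℕ) ω) = ∏ p ∈ P, Y p ω :=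
    fun ω => Finset.prod_coe_sort P (fun p => Y p ω)
  have hintP : Integrable (fun ω => ∏ p ∈ P, Y p ω) ℙ := by
    have := hprod.1
    simpa only [hconv] using this
  have hintegral : (∫ ω, ∏ p ∈ P, Y p ω) = ∏ p ∈ P, ∫ ω, Y p ω := by
    have h2 := hprod.2
    simp only [hconv] at h2
    rw [h2]
    exact Finset.prod_coe_sort P (fun p => ∫ ω, Y p ω)
  -- the event
  set A : Set Ω := {ω | (∀ i, 1 ≤ i → i ≤ ℓ → X (b (i - 1)) (b i) ω = 1) ∧
      t ≤ ∑ p ∈ P, X p.1 p.2 ω} with hA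
  have hAmeas : MeasurableSet A := by
    have : A = (⋂ i, ⋂ (_ : 1 ≤ i), ⋂ (_ : i ≤ ℓ), (X (b (i-1)) (b i)) ⁻¹' {1}) ∩
        {ω | t ≤ ∑ p ∈ P, X p.1 p.2 ω} := by
      ext ω
      simp [hA, Set.mem_iInter]
    rw [this]
    refine MeasurableSet.inter ?_ ?_
    · exact MeasurableSet.iInter fun i => MeasurableSet.iInter fun _ =>
        MeasurableSet.iInter fun _ => (hXm _ _) (measurableSet_singleton 1)
    · exact measurableSet_le measurable_const (Finset.measurable_sum _ fun p _ => hXm p.1 p.2)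
  -- pointwise bound on the event
  have hpoint : ∀ ω ∈ A, Real.exp t ≤ ∏ p ∈ P, Y p ω := by
    intro ω hω
    obtain ⟨hfeas, hsum⟩ := hω
    have hYexp : ∀ p ∈ P, Y p ω = Real.exp (X p.1 p.2 ω) := by
      intro p hp
      by_cases hmem : p.2 ∈ T
      · have hpimg := hp
        rw [hP] at hpimg
        obtain ⟨j, hj, rfl⟩ := Finset.mem_image.mp hpimg
        obtain ⟨i, hi, hbij⟩ := Finset.mem_image.mp hmem
        rw [Finset.mem_Icc] at hi
        have hbij' : b i = j := hbij
        have hfst : a j = b (i - 1) := by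
          rw [← hbij']
          exact hafeas i hi.1 hi.2
        have hX1 : X (a j) j ω = 1 := by
          rw [hfst, ← hbij']
          exact hfeas i hi.1 hi.2
        rw [hY]
        simp only [if_pos hmem]
        rw [hX1]
        simp [he1]
      · rw [hY]
        simp only [if_neg hmem]
        rcases hX01' p hp ω with h | h <;> rw [h] <;> simp [he1]
    calc Real.exp t ≤ Real.exp (∑ p ∈ P, X p.1 p.2 ω) := Real.exp_le_exp.mpr hsum
    _ = ∏ p ∈ P, Real.exp (X p.1 p.2 ω) := by rw [← Real.exp_sum]
    _ = ∏ p ∈ P, Y p ω := (Finset.prod_congr rfl hYexp).symm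
  -- Markov
  have hmarkov : Real.exp t * (ℙ A).toReal ≤ ∫ ω, ∏ p ∈ P, Y p ω := by
    have hind : Integrable (A.indicator fun _ => Real.exp t) ℙ :=
      (integrable_const _).indicator hAmeas
    have hmono : ∀ ω, (A.indicator fun _ => Real.exp t) ω ≤ ∏ p ∈ P, Y p ω := by
      intro ω
      by_cases hω : ω ∈ A
      · rw [Set.indicator_of_mem hω]
        exact hpoint ω hω
      · rw [Set.indicator_of_notMem hω]
        exact Finset.prod_nonneg fun p hp => hY0 p hp ω
    have h1 : (∫ ω, (A.indicator fun _ => Real.exp t) ω) = (ℙ A).toReal * Real.exp t := by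
      rw [integral_indicator_const _ hAmeas]
      simp [smul_eq_mul, measureReal_def]
    have h2 := integral_mono hind hintP hmono
    rw [h1] at h2
    linarith [h2]
  -- bound on each integral
  have hIocsub : ∀ j ∈ Finset.Ioc 1 n, (a j, j) ∈ P := by
    intro j hj
    rw [hP]
    exact Finset.mem_image_of_mem _ hj
  have hbound : ∀ j ∈ Finset.Ioc 1 n, (∫ ω, Y (a j, j) ω)
      ≤ (if j ∈ T then e1 * (δ / (j:ℝ)) else 1) * (1 + (e1 - 1) * (δ / (j:ℝ))) := by
    intro j hj
    rw [Finset.mem_Ioc] at hj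
    obtain ⟨haj1, hajlt⟩ := hab j hj.1 hj.2
    have hjpos : (0:ℝ) < (j:ℝ) := by
      have : 0 < j := by omega
      exact_mod_cast this
    have hXint : Integrable (X (a j) j) ℙ :=
      integrable01 (hXm _ _) (fun ω => hX01 _ _ ω haj1 hajlt hj.2)
    have hmean := hXmean (a j) j haj1 hajlt hj.2
    have hwge1 : (1:ℝ) ≤ 1 + (e1 - 1) * (δ / (j:ℝ)) := by
      have : 0 ≤ (e1 - 1) * (δ / (j:ℝ)) := by
        apply mul_nonneg (by linarith) (by positivity)
      linarith
    by_cases hmem : j ∈ T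
    · have hYeq : (fun ω => Y (a j, j) ω) = fun ω => e1 * X (a j) j ω := by
        funext ω; rw [hY]; simp [hmem]
      rw [hYeq, if_pos hmem]
      have h1 : (∫ ω, e1 * X (a j) j ω) = e1 * ∫ ω, X (a j) j ω := integral_const_mul e1 _
      rw [h1]
      have h2 : e1 * (∫ ω, X (a j) j ω) ≤ e1 * (δ / (j:ℝ)) :=
        mul_le_mul_of_nonneg_left hmean he1pos.le
      calc e1 * (∫ ω, X (a j) j ω) ≤ e1 * (δ / (j:ℝ)) := h2
      _ ≤ e1 * (δ / (j:ℝ)) * (1 + (e1 - 1) * (δ / (j:ℝ))) := by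
        refine le_mul_of_one_le_right ?_ hwge1
        positivity
    · have hYeq : (fun ω => Y (a j, j) ω) = fun ω => 1 + (e1 - 1) * X (a j) j ω := by
        funext ω; rw [hY]; simp [hmem]
      rw [hYeq, if_neg hmem, one_mul]
      have h1 : (∫ ω, (1 + (e1 - 1) * X (a j) j ω)) =
          1 + (e1 - 1) * ∫ ω, X (a j) j ω := by
        rw [integral_add (integrable_const 1) (hXint.const_mul _),
          integral_const_mul]
        simp
      rw [h1]
      have : (e1 - 1) * (∫ ω, X (a j) j ω) ≤ (e1 - 1) * (δ / (j:ℝ)) :=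
        mul_le_mul_of_nonneg_left hmean (by linarith)
      linarith
  -- put it together
  have hinj : Set.InjOn (fun j => (a j, j)) (Finset.Ioc 1 n : Set ℕ) := by
    intro j1 _ j2 _ h
    exact congrArg Prod.snd h
  have hprodP : (∏ p ∈ P, ∫ ω, Y p ω) = ∏ j ∈ Finset.Ioc 1 n, ∫ ω, Y (a j, j) ω := by
    rw [hP]
    exact Finset.prod_image fun j1 h1 j2 h2 h => hinj h1 h2 h
  have hprodbound : (∏ j ∈ Finset.Ioc 1 n, ∫ ω, Y (a j, j) ω)
      ≤ ∏ j ∈ Finset.Ioc 1 n,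
        ((if j ∈ T then e1 * (δ / (j:ℝ)) else 1) * (1 + (e1 - 1) * (δ / (j:ℝ)))) := by
    refine Finset.prod_le_prod (fun j hj => ?_) hbound
    exact integral_nonneg fun ω => hY0 _ (hIocsub j hj) ω
  have hsplit : (∏ j ∈ Finset.Ioc 1 n,
        ((if j ∈ T then e1 * (δ / (j:ℝ)) else 1) * (1 + (e1 - 1) * (δ / (j:ℝ)))))
      = (∏ i ∈ T, (e1 * (δ / (i:ℝ)))) *
          ∏ j ∈ Finset.Ioc 1 n, (1 + (e1 - 1) * (δ / (j:ℝ))) := by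
    rw [Finset.prod_mul_distrib]
    congr 1
    rw [Finset.prod_ite_mem, Finset.inter_eq_right.mpr hTsub]
  -- final computation
  have hAfin : (ℙ A).toReal ≤ Real.exp (-t) * ∫ ω, ∏ p ∈ P, Y p ω := by
    have hexp : 0 < Real.exp t := Real.exp_pos t
    have h2 : (ℙ A).toReal ≤ (∫ ω, ∏ p ∈ P, Y p ω) / Real.exp t :=
      (le_div_iff₀' hexp).mpr hmarkov
    rw [Real.exp_neg]
    calc (ℙ A).toReal ≤ (∫ ω, ∏ p ∈ P, Y p ω) / Real.exp t := h2
    _ = (Real.exp t)⁻¹ * ∫ ω, ∏ p ∈ P, Y p ω := by ring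
  calc (ℙ A).toReal ≤ Real.exp (-t) * ∫ ω, ∏ p ∈ P, Y p ω := hAfin
  _ = Real.exp (-t) * ∏ j ∈ Finset.Ioc 1 n, ∫ ω, Y (a j, j) ω := by
      rw [hintegral, hprodP]
  _ ≤ Real.exp (-t) * ((∏ i ∈ T, (e1 * (δ / (i:ℝ)))) *
        ∏ j ∈ Finset.Ioc 1 n, (1 + (e1 - 1) * (δ / (j:ℝ)))) := by
      refine mul_le_mul_of_nonneg_left ?_ (Real.exp_pos _).le
      rw [← hsplit]
      exact hprodbound.trans_eq rfl
  _ = Real.exp (-t) * (∏ i ∈ T, (e1 * (δ / (i:ℝ)))) *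
        ∏ j ∈ Finset.Ioc 1 n, (1 + (e1 - 1) * (δ / (j:ℝ))) := by ring

lemma image_seqOf {n : ℕ} {T : Finset ℕ} (h : isIndexSeq n T.card (seqOf T)) :
    (Finset.Icc 1 T.card).image (seqOf T) = T := by
  obtain ⟨h0, hmono, _⟩ := h
  have hmle := bmono hmono
  have hsub : (Finset.Icc 1 T.card).image (seqOf T) ⊆ T := by
    intro x hx
    obtain ⟨i, hi, rfl⟩ := Finset.mem_image.mp hx
    rw [Finset.mem_Icc] at hi
    have hlen : (T.sort (· ≤ ·)).length = T.card := Finset.length_sort _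
    obtain ⟨k, rfl⟩ : ∃ k, i = k + 1 := ⟨i - 1, by omega⟩
    have hk : k < (T.sort (· ≤ ·)).length := by omega
    have heq : seqOf T (k+1) = (T.sort (· ≤ ·))[k] := by
      unfold seqOf
      rw [List.getD_cons_succ, List.getD_eq_getElem _ _ hk]
    rw [heq]
    exact (Finset.mem_sort _).mp (List.getElem_mem hk)
  refine Finset.eq_of_subset_of_card_le hsub ?_
  have hinj : Set.InjOn (seqOf T) (Finset.Icc 1 T.card : Set ℕ) := by
    intro x hx y hy hxy
    simp only [Finset.coe_Icc, Set.mem_Icc] at hx hy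
    by_contra hne
    rcases Nat.lt_or_ge x y with hlt | hge
    · have h1 : seqOf T x < seqOf T y := by
        calc seqOf T x < seqOf T (x+1) := hmono x (by omega)
        _ ≤ seqOf T y := hmle (x+1) y (by omega) hy.2
      omega
    · have hlt : y < x := by omega
      have h1 : seqOf T y < seqOf T x := by
        calc seqOf T y < seqOf T (y+1) := hmono y (by omega)
        _ ≤ seqOf T x := hmle (y+1) x (by omega) hx.2
      omega
  rw [Finset.card_image_of_injOn hinj, Nat.card_Icc]
  omega


/-- let `δ ≥ 1` be real. There exist constants `β₀ ≥ 1` and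
`κ > 0`, depending only on `δ`, such that the following holds for every integer
`n ≥ 2`: if `X i j` (`1 ≤ i < j ≤ n`) are `{0,1}`-valued random variables on a
probability space with (i) `E[X i j] ≤ δ/j` for all `1 ≤ i < j ≤ n`, and
(ii) for every `σ ∈ I(n)` the family `{X i j : (i,j) ∈ X(σ)}` mutually
independent, and `F σ` denotes the event that `X (b (i−1)) (b i) = 1` for every
`i ∈ {1,…,ℓ}` (`σ` is then called feasible), then for every real `β ≥ β₀`:
`Pr[∃ σ ∈ I(n), F σ occurs and ∑_{(i,j) ∈ X(σ)} X i j ≥ β·ln n] ≤ n^(−κ·β)`. -/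
theorem stmt15 (δ : ℝ) (hδ : 1 ≤ δ) :
    ∃ β₀ κ : ℝ, 1 ≤ β₀ ∧ 0 < κ ∧
      ∀ (n : ℕ), 2 ≤ n →
      ∀ (Ω : Type) (_ : MeasureSpace Ω)
        (_ : IsProbabilityMeasure (ℙ : Measure Ω))
        (X : ℕ → ℕ → Ω → ℝ),
        (∀ i j, Measurable (X i j)) →
        (∀ i j ω, 1 ≤ i → i < j → j ≤ n → X i j ω = 0 ∨ X i j ω = 1) →
        (∀ i j, 1 ≤ i → i < j → j ≤ n → (∫ ω, X i j ω) ≤ δ / (j : ℝ)) →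
        (∀ ℓ (b : ℕ → ℕ), isIndexSeq n ℓ b →
          ProbabilityTheory.iIndepFun
            (fun p : (pathEvents n ℓ b : Finset (ℕ × ℕ)) => X p.1.1 p.1.2) ℙ) →
        ∀ β : ℝ, β₀ ≤ β →
          (ℙ {ω | ∃ (ℓ : ℕ) (b : ℕ → ℕ), isIndexSeq n ℓ b ∧
                (∀ i, 1 ≤ i → i ≤ ℓ → X (b (i - 1)) (b i) ω = 1) ∧
                β * Real.log n ≤ ∑ p ∈ pathEvents n ℓ b, X p.1 p.2 ω}).toReal
            ≤ (n : ℝ) ^ (-(κ * β)) := by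
  refine ⟨10 * δ, 1/2, by linarith, by norm_num, ?_⟩
  intro n hn Ω mΩ hprob X hXm hX01 hXmean hindep β hβ
  haveI := hprob
  classical
  set t := β * Real.log (n:ℝ) with ht
  set e1 := Real.exp 1 with he1
  have he1pos : 0 < e1 := Real.exp_pos 1
  have he1lt : e1 < 2.7182818286 := Real.exp_one_lt_d9
  have he1ge1 : 1 ≤ e1 := by
    rw [he1]
    have := Real.add_one_le_exp (1:ℝ)
    linarith
  have hδ0 : 0 < δ := by linarith
  have hn1 : (1:ℕ) ≤ n := by omega
  have hnpos : (0:ℝ) < (n:ℝ) := by positivity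
  have hn1R : (1:ℝ) ≤ (n:ℝ) := by exact_mod_cast hn1
  have hlogn : 0 ≤ Real.log n := Real.log_nonneg hn1R
  set W := ∏ j ∈ Finset.Ioc 1 n, (1 + (e1 - 1) * (δ / (j:ℝ))) with hW
  have hWnonneg : 0 ≤ W := by
    refine Finset.prod_nonneg fun j hj => ?_
    have : (0:ℝ) ≤ (e1 - 1) * (δ / (j:ℝ)) := by
      apply mul_nonneg (by linarith)
      positivity
    linarith
  set A : Finset ℕ → Set Ω := fun T =>
    {ω | isIndexSeq n T.card (seqOf T) ∧
      (∀ i, 1 ≤ i → i ≤ T.card → X (seqOf T (i - 1)) (seqOf T i) ω = 1) ∧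
      t ≤ ∑ p ∈ pathEvents n T.card (seqOf T), X p.1 p.2 ω} with hA
  set B : Finset ℕ → ℝ := fun T =>
    Real.exp (-t) * (∏ i ∈ T, (e1 * (δ / (i:ℝ)))) * W with hB
  have hBnonneg : ∀ T : Finset ℕ, 0 ≤ B T := by
    intro T
    rw [hB]
    refine mul_nonneg (mul_nonneg (Real.exp_pos _).le ?_) hWnonneg
    refine Finset.prod_nonneg fun i hi => ?_
    positivity
  -- covering
  have hcover : {ω | ∃ (ℓ : ℕ) (b : ℕ → ℕ), isIndexSeq n ℓ b ∧
        (∀ i, 1 ≤ i → i ≤ ℓ → X (b (i - 1)) (b i) ω = 1) ∧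
        t ≤ ∑ p ∈ pathEvents n ℓ b, X p.1 p.2 ω}
      ⊆ ⋃ T ∈ (Finset.Ioc 1 n).powerset, A T := by
    intro ω hω
    obtain ⟨ℓ, b, hb, hfeas, hsum⟩ := hω
    obtain ⟨hcard, hagree, hTsub⟩ := seqOf_spec hb
    obtain ⟨hb0, hbmono, hbn⟩ := hb
    refine Set.mem_biUnion (Finset.mem_powerset.mpr hTsub) ?_
    simp only [hA, Set.mem_setOf_eq]
    have hidx : isIndexSeq n ((Finset.Icc 1 ℓ).image b).card
        (seqOf ((Finset.Icc 1 ℓ).image b)) := by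
      rw [hcard]
      refine ⟨?_, ?_, ?_⟩
      · rw [hagree 0 (by omega), hb0]
      · intro i hi
        rw [hagree i (by omega), hagree (i+1) (by omega)]
        exact hbmono i hi
      · rw [hagree ℓ le_rfl]
        exact hbn
    refine ⟨hidx, ?_, ?_⟩
    · intro i h1 h2
      rw [hcard] at h2
      rw [hagree (i-1) (by omega), hagree i h2]
      exact hfeas i h1 h2
    · have hpe : pathEvents n ((Finset.Icc 1 ℓ).image b).card
          (seqOf ((Finset.Icc 1 ℓ).image b)) = pathEvents n ℓ b := by
        rw [hcard]
        exact pathEvents_congr (fun i hi => hagree i hi)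
      rw [hpe]
      exact hsum
  -- individual bounds
  have hATbound : ∀ T ∈ (Finset.Ioc 1 n).powerset, (ℙ (A T)).toReal ≤ B T := by
    intro T hTpow
    by_cases hT : isIndexSeq n T.card (seqOf T)
    · have him : (Finset.Icc 1 T.card).image (seqOf T) = T := image_seqOf hT
      have hch := chernoff δ hδ n T.card hn (seqOf T) hT X hXm hX01 hXmean
        (hindep T.card (seqOf T) hT) t
      rw [him] at hch
      have hset : A T = {ω | (∀ i, 1 ≤ i → i ≤ T.card →
            X (seqOf T (i - 1)) (seqOf T i) ω = 1) ∧
          t ≤ ∑ p ∈ pathEvents n T.card (seqOf T), X p.1 p.2 ω} := by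
        ext ω
        simp only [hA, Set.mem_setOf_eq]
        tauto
      rw [hset, hB]
      exact hch
    · have hempty : A T = ∅ := by
        ext ω
        simp only [hA, Set.mem_setOf_eq, Set.mem_empty_iff_false, iff_false]
        tauto
      rw [hempty]
      simpa using hBnonneg T
  -- measure bound
  have hmeasle : ℙ {ω | ∃ (ℓ : ℕ) (b : ℕ → ℕ), isIndexSeq n ℓ b ∧
        (∀ i, 1 ≤ i → i ≤ ℓ → X (b (i - 1)) (b i) ω = 1) ∧
        t ≤ ∑ p ∈ pathEvents n ℓ b, X p.1 p.2 ω}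
      ≤ ∑ T ∈ (Finset.Ioc 1 n).powerset, ℙ (A T) :=
    (measure_mono hcover).trans (measure_biUnion_finset_le _ _)
  have h2 : ℙ {ω | ∃ (ℓ : ℕ) (b : ℕ → ℕ), isIndexSeq n ℓ b ∧
        (∀ i, 1 ≤ i → i ≤ ℓ → X (b (i - 1)) (b i) ω = 1) ∧
        t ≤ ∑ p ∈ pathEvents n ℓ b, X p.1 p.2 ω}
      ≤ ENNReal.ofReal (∑ T ∈ (Finset.Ioc 1 n).powerset, B T) := by
    refine hmeasle.trans ?_
    calc ∑ T ∈ (Finset.Ioc 1 n).powerset, ℙ (A T)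
        ≤ ∑ T ∈ (Finset.Ioc 1 n).powerset, ENNReal.ofReal (B T) := by
          refine Finset.sum_le_sum fun T hT => ?_
          exact (ENNReal.le_ofReal_iff_toReal_le (measure_ne_top _ _)
            (hBnonneg T)).mpr (hATbound T hT)
    _ = ENNReal.ofReal (∑ T ∈ (Finset.Ioc 1 n).powerset, B T) :=
        (ENNReal.ofReal_sum_of_nonneg (fun T _ => hBnonneg T)).symm
  have h3 : (ℙ {ω | ∃ (ℓ : ℕ) (b : ℕ → ℕ), isIndexSeq n ℓ b ∧
        (∀ i, 1 ≤ i → i ≤ ℓ → X (b (i - 1)) (b i) ω = 1) ∧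
        t ≤ ∑ p ∈ pathEvents n ℓ b, X p.1 p.2 ω}).toReal
      ≤ ∑ T ∈ (Finset.Ioc 1 n).powerset, B T :=
    ENNReal.toReal_le_of_le_ofReal (Finset.sum_nonneg fun T _ => hBnonneg T) h2
  refine h3.trans ?_
  -- sum computation
  have hsum : ∑ T ∈ (Finset.Ioc 1 n).powerset, B T
      = (Real.exp (-t) * W) * ∑ T ∈ (Finset.Ioc 1 n).powerset,
          ∏ i ∈ T, (e1 * (δ / (i:ℝ))) := by
    rw [Finset.mul_sum]
    refine Finset.sum_congr rfl fun T _ => ?_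
    rw [hB]
    ring
  have hps : ∏ j ∈ Finset.Ioc 1 n, (e1 * (δ / (j:ℝ)) + 1)
      = ∑ T ∈ (Finset.Ioc 1 n).powerset, ∏ i ∈ T, (e1 * (δ / (i:ℝ))) := by
    rw [Finset.prod_add]
    exact Finset.sum_congr rfl fun T _ => by simp
  have hplog : ∏ j ∈ Finset.Ioc 1 n, (e1 * (δ / (j:ℝ)) + 1)
      ≤ Real.exp (e1 * δ * Real.log n) := by
    have hle := prod_one_add_le hn1 (e1 * δ) (by positivity)
    refine le_trans (le_of_eq ?_) hle
    exact Finset.prod_congr rfl fun j hj => by ring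
  have hWlog : W ≤ Real.exp ((e1 - 1) * δ * Real.log n) := by
    have hle := prod_one_add_le hn1 ((e1 - 1) * δ)
      (mul_nonneg (by linarith) hδ0.le)
    refine le_trans (le_of_eq ?_) hle
    rw [hW]
    exact Finset.prod_congr rfl fun j hj => by ring
  rw [hsum, ← hps]
  have hstep1 : (Real.exp (-t) * W) * ∏ j ∈ Finset.Ioc 1 n, (e1 * (δ / (j:ℝ)) + 1)
      ≤ (Real.exp (-t) * W) * Real.exp (e1 * δ * Real.log n) := by
    refine mul_le_mul_of_nonneg_left hplog ?_
    exact mul_nonneg (Real.exp_pos _).le hWnonneg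
  have hstep2 : (Real.exp (-t) * W) * Real.exp (e1 * δ * Real.log n)
      ≤ (Real.exp (-t) * Real.exp ((e1 - 1) * δ * Real.log n))
          * Real.exp (e1 * δ * Real.log n) := by
    refine mul_le_mul_of_nonneg_right ?_ (Real.exp_pos _).le
    exact mul_le_mul_of_nonneg_left hWlog (Real.exp_pos _).le
  have hkey : (Real.exp (-t) * Real.exp ((e1 - 1) * δ * Real.log n))
      * Real.exp (e1 * δ * Real.log n) ≤ (n:ℝ) ^ (-(1/2 * β)) := by
    rw [← Real.exp_add, ← Real.exp_add]
    rw [Real.rpow_def_of_pos hnpos]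
    refine Real.exp_le_exp.mpr ?_
    rw [ht]
    have h5 : (2 * e1 - 1) * δ ≤ 5 * δ := by nlinarith
    have hhalf : (2 * e1 - 1) * δ ≤ (1/2) * β := by linarith
    have : -(β * Real.log n) + (e1 - 1) * δ * Real.log n + e1 * δ * Real.log n
        = ((2 * e1 - 1) * δ - β) * Real.log n := by ring
    rw [this]
    have : Real.log (n:ℝ) * -(1/2 * β) = (-(1/2) * β) * Real.log n := by ring
    rw [this]
    refine mul_le_mul_of_nonneg_right ?_ hlogn
    linarith
  calc (Real.exp (-t) * W) * ∏ j ∈ Finset.Ioc 1 n, (e1 * (δ / (j:ℝ)) + 1)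
      ≤ (Real.exp (-t) * W) * Real.exp (e1 * δ * Real.log n) := hstep1
  _ ≤ (Real.exp (-t) * Real.exp ((e1 - 1) * δ * Real.log n))
        * Real.exp (e1 * δ * Real.log n) := hstep2
  _ ≤ (n:ℝ) ^ (-(1/2 * β)) := hkey
end
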